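/- arXiv:2105.07746 — 6 statements merged into one kernel-verified Lean document; each statement's English description precedes it below -/
import Mathlib

section
/- For every regular uncountable cardinal κ, the unbounding number b_κ (defined modulo the bounded ideal) equals the club unbounding number b^cl_κ (defined modulo the non-stationary ideal). -/
open Set Cardinal

/-- `c` is a club in the well-ordered type `α` (thought of as the cardinal `κ = #α`):
it is closed (contains the supremum of each of its nonempty bounded subsets) and unbounded. -/
def IsClubIn {α : Type*} [LinearOrder α] (c : Set α) : Prop :=
  (∀ s ⊆ c, s.Nonempty → ∀ a : α, IsLUB s a → a ∈ c) ∧ ∀ a : α, ∃ b ∈ c, a < b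

/-- `x` is stationary: it meets every club. -/
def IsStatIn {α : Type*} [LinearOrder α] (x : Set α) : Prop :=
  ∀ c : Set α, IsClubIn c → (x ∩ c).Nonempty

/-- The unbounding number `b_κ`, defined modulo the bounded ideal:
the least cardinality of a family `B ⊆ κ^κ` such that for every `g` there is `f ∈ B`
with `f ≰* g`, i.e. `{a | g a < f a}` is unbounded. -/
noncomputable def bddUnboundingNumber (α : Type*) [LinearOrder α] : Cardinal :=
  sInf { c : Cardinal |
    ∃ B : Set (α → α), (∀ g : α → α, ∃ f ∈ B, ¬ BddAbove {a : α | g a < f a}) ∧ c = #B }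

/-- The club unbounding number `b^cl_κ`, defined modulo the non-stationary ideal:
the least cardinality of a family `B ⊆ κ^κ` such that for every `g` there is `f ∈ B`
with `f ≰*_cl g`, i.e. `{a | g a < f a}` is stationary. -/
noncomputable def clubUnboundingNumber (α : Type*) [LinearOrder α] : Cardinal :=
  sInf { c : Cardinal |
    ∃ B : Set (α → α), (∀ g : α → α, ∃ f ∈ B, IsStatIn {a : α | g a < f a}) ∧ c = #B }

namespace BddClubAux

attribute [local instance] Classical.propDecidable
set_option linter.unusedSectionVars false
set_option linter.unusedVariables false

variable {α : Type*} [LinearOrder α] [WellFoundedLT α] [Nonempty α]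

/-- least upper bound (junk value if unbounded) -/
noncomputable def lub (s : Set α) : α :=
  if h : BddAbove s then (wellFounded_lt (α := α)).min _ h
  else Classical.arbitrary α

theorem isLUB_lub {s : Set α} (h : BddAbove s) : IsLUB s (lub s) := by
  rw [lub, dif_pos h]
  exact ⟨(wellFounded_lt (α := α)).min_mem _ h,
    fun b hb => not_lt.1 ((wellFounded_lt (α := α)).not_lt_min _ hb)⟩

theorem le_lub {s : Set α} (h : BddAbove s) {x : α} (hx : x ∈ s) : x ≤ lub s :=
  (isLUB_lub h).1 hx

/-- next element of a set strictly above `a` (junk if none) -/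
noncomputable def nxt (C : Set α) (a : α) : α :=
  if h : (C ∩ Ioi a).Nonempty then (wellFounded_lt (α := α)).min _ h
  else Classical.arbitrary α

theorem nxt_mem {C : Set α} {a : α} (h : (C ∩ Ioi a).Nonempty) : nxt C a ∈ C ∩ Ioi a := by
  rw [nxt, dif_pos h]; exact (wellFounded_lt (α := α)).min_mem _ h

theorem nxt_le {C : Set α} {a x : α} (h : (C ∩ Ioi a).Nonempty) (hx : x ∈ C ∩ Ioi a) :
    nxt C a ≤ x := by
  rw [nxt, dif_pos h]
  exact not_lt.1 ((wellFounded_lt (α := α)).not_lt_min _ hx)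

theorem clubNe {C : Set α} (hC : IsClubIn C) (a : α) : (C ∩ Ioi a).Nonempty := by
  obtain ⟨b, hb, hab⟩ := hC.2 a
  exact ⟨b, hb, hab⟩

theorem nxt_mem_club {C : Set α} (hC : IsClubIn C) (a : α) : nxt C a ∈ C :=
  (nxt_mem (clubNe hC a)).1

theorem lt_nxt_club {C : Set α} (hC : IsClubIn C) (a : α) : a < nxt C a :=
  (nxt_mem (clubNe hC a)).2

theorem nxt_anti {C D : Set α} (hC : IsClubIn C) (hD : IsClubIn D) (hsub : D ⊆ C) (a : α) :
    nxt C a ≤ nxt D a :=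
  nxt_le (clubNe hC a) ⟨hsub (nxt_mem_club hD a), lt_nxt_club hD a⟩

theorem isLUB_cofinal {u : ℕ → α} {l : α} (hl : IsLUB (range u) l)
    {s : Set α} (hsub : s ⊆ range u) (hcof : ∀ j, ∃ x ∈ s, u j ≤ x) : IsLUB s l := by
  constructor
  · exact fun x hx => hl.1 (hsub hx)
  · intro b hb
    apply hl.2
    rintro x ⟨k, rfl⟩
    obtain ⟨y, hy, hky⟩ := hcof k
    exact hky.trans (hb hy)

theorem mk_Iic_lt (hreg : (#α).IsRegular) (hunc : ℵ₀ < #α)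
    (hinit : ∀ a : α, #(Iio a) < #α) (a : α) : #(Iic a) < #α := by
  rw [← Iio_insert]
  exact mk_insert_le.trans_lt
    (add_lt_of_lt hreg.aleph0_le (hinit a) (one_lt_aleph0.trans hunc))

theorem bddAbove_of_mk_lt (hreg : (#α).IsRegular) (hunc : ℵ₀ < #α)
    (hinit : ∀ a : α, #(Iio a) < #α) {s : Set α} (hs : #s < #α) : BddAbove s := by
  by_contra hb
  rw [not_bddAbove_iff] at hb
  have hcover : (univ : Set α) ⊆ ⋃ x : s, Iic (x : α) := by
    intro a _
    obtain ⟨y, hy, hay⟩ := hb a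
    exact mem_iUnion.2 ⟨⟨y, hy⟩, hay.le⟩
  have h1 : #α ≤ #(⋃ x : s, Iic (x : α)) := by
    have := mk_le_mk_of_subset hcover
    rwa [mk_univ] at this
  have h3 : Cardinal.sum (fun x : s => #(Iic (x : α))) < #α :=
    sum_lt_of_isRegular hreg hs fun x => mk_Iic_lt hreg hunc hinit _
  exact absurd (h1.trans mk_iUnion_le_sum_mk) h3.not_ge

theorem bddAbove_range_nat (hreg : (#α).IsRegular) (hunc : ℵ₀ < #α)
    (hinit : ∀ a : α, #(Iio a) < #α) (u : ℕ → α) : BddAbove (range u) :=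
  bddAbove_of_mk_lt hreg hunc hinit ((countable_range u).le_aleph0.trans_lt hunc)

theorem exists_gt' (hreg : (#α).IsRegular) (hunc : ℵ₀ < #α)
    (hinit : ∀ a : α, #(Iio a) < #α) (z : α) : ∃ y, z < y := by
  by_contra h
  push_neg at h
  have hcover : (univ : Set α) ⊆ Iic z := fun y _ => h y
  have h1 : #α ≤ #(Iic z) := by
    have := mk_le_mk_of_subset hcover
    rwa [mk_univ] at this
  exact absurd h1 (mk_Iic_lt hreg hunc hinit z).not_ge

theorem isClubIn_Ioi (hreg : (#α).IsRegular) (hunc : ℵ₀ < #α)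
    (hinit : ∀ a : α, #(Iio a) < #α) (a : α) : IsClubIn (Ioi a) := by
  constructor
  · rintro s hs ⟨x, hx⟩ b hb
    exact lt_of_lt_of_le (hs hx) (hb.1 hx)
  · intro z
    obtain ⟨y, hy⟩ := exists_gt' hreg hunc hinit (max a z)
    exact ⟨y, lt_of_le_of_lt (le_max_left _ _) hy, lt_of_le_of_lt (le_max_right _ _) hy⟩

theorem isClubIn_iInter (hreg : (#α).IsRegular) (hunc : ℵ₀ < #α)
    (hinit : ∀ a : α, #(Iio a) < #α) {D : ℕ → Set α} (hD : ∀ n, IsClubIn (D n)) :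
    IsClubIn (⋂ n, D n) := by
  constructor
  · intro s hs hne b hb
    exact mem_iInter.2 fun n => (hD n).1 s (fun x hx => mem_iInter.1 (hs hx) n) hne b hb
  · intro a
    let u : ℕ → α := fun k =>
      Nat.rec (nxt (D 0) a) (fun k x => nxt (D (Nat.unpair (k + 1)).1) x) k
    have hsucc : ∀ k, u (k + 1) = nxt (D (Nat.unpair (k + 1)).1) (u k) := fun k => rfl
    have hmono : StrictMono u := strictMono_nat_of_lt_succ (by
      intro k
      rw [hsucc]
      exact lt_nxt_club (hD _) (u k))
    have hbdd : BddAbove (range u) := bddAbove_range_nat hreg hunc hinit u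
    have hl : IsLUB (range u) (lub (range u)) := isLUB_lub hbdd
    have humem : ∀ k, 1 ≤ k → u k ∈ D (Nat.unpair k).1 := by
      intro k hk
      match k, hk with
      | (k' + 1), _ =>
        rw [hsucc]
        exact nxt_mem_club (hD _) (u k')
    refine ⟨lub (range u), mem_iInter.2 fun m => ?_,
      lt_of_lt_of_le (lt_nxt_club (hD 0) a) (le_lub hbdd ⟨0, rfl⟩)⟩
    have hidx : ∀ j : ℕ, ∃ k, j ≤ k ∧ 1 ≤ k ∧ (Nat.unpair k).1 = m := by
      intro j
      refine ⟨Nat.pair m (j + 1), ?_, ?_, by rw [Nat.unpair_pair]⟩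
      · exact le_trans (Nat.le_succ j) (Nat.right_le_pair m (j + 1))
      · exact le_trans (Nat.succ_le_succ (Nat.zero_le j)) (Nat.right_le_pair m (j + 1))
    have hsub : u '' {k | 1 ≤ k ∧ (Nat.unpair k).1 = m} ⊆ D m := by
      rintro x ⟨k, ⟨hk1, hkm⟩, rfl⟩
      have := humem k hk1
      rwa [hkm] at this
    have hsne : (u '' {k | 1 ≤ k ∧ (Nat.unpair k).1 = m}).Nonempty := by
      obtain ⟨k, _, hk1, hkm⟩ := hidx 0
      exact ⟨u k, ⟨k, ⟨hk1, hkm⟩, rfl⟩⟩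
    have hslub : IsLUB (u '' {k | 1 ≤ k ∧ (Nat.unpair k).1 = m}) (lub (range u)) := by
      apply isLUB_cofinal hl
      · rintro x ⟨k, _, rfl⟩; exact ⟨k, rfl⟩
      · intro j
        obtain ⟨k, hjk, hk1, hkm⟩ := hidx j
        exact ⟨u k, ⟨k, ⟨hk1, hkm⟩, rfl⟩, hmono.monotone hjk⟩
    exact (hD m).1 _ hsub hsne _ hslub

theorem IsClubIn.inter (hreg : (#α).IsRegular) (hunc : ℵ₀ < #α)
    (hinit : ∀ a : α, #(Iio a) < #α) {C D : Set α}
    (hC : IsClubIn C) (hD : IsClubIn D) : IsClubIn (C ∩ D) := by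
  have h := isClubIn_iInter hreg hunc hinit (D := fun n => if n = 0 then C else D)
    (fun n => by by_cases hn : n = 0 <;> simp [hn, hC, hD])
  have he : (⋂ n : ℕ, (if n = 0 then C else D)) = C ∩ D := by
    ext x
    simp only [mem_iInter, mem_inter_iff]
    constructor
    · intro hx
      have h0 := hx 0
      have h1 := hx 1
      simp at h0 h1
      exact ⟨h0, h1⟩
    · intro hx n
      by_cases hn : n = 0 <;> simp [hn, hx.1, hx.2]
  rwa [he] at h

/-- monotone hull -/
noncomputable def hull (f : α → α) (a : α) : α :=
  lub (f '' Iic a)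

theorem hull_bdd (hreg : (#α).IsRegular) (hunc : ℵ₀ < #α)
    (hinit : ∀ a : α, #(Iio a) < #α) (f : α → α) (a : α) : BddAbove (f '' Iic a) :=
  bddAbove_of_mk_lt hreg hunc hinit
    (mk_image_le.trans_lt (mk_Iic_lt hreg hunc hinit a))

theorem le_hull (hreg : (#α).IsRegular) (hunc : ℵ₀ < #α)
    (hinit : ∀ a : α, #(Iio a) < #α) (f : α → α) (a : α) :
    f a ≤ hull f a :=
  le_lub (hull_bdd hreg hunc hinit f a) ⟨a, self_mem_Iic, rfl⟩

theorem hull_mono (hreg : (#α).IsRegular) (hunc : ℵ₀ < #α)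
    (hinit : ∀ a : α, #(Iio a) < #α) (f : α → α) :
    Monotone (hull f) := by
  intro a b hab
  apply (isLUB_lub (hull_bdd hreg hunc hinit f a)).2
  intro x hx
  exact le_lub (hull_bdd hreg hunc hinit f b)
    (image_mono (Iic_subset_Iic.2 hab) hx)

end BddClubAux

open BddClubAux in
/-- For every regular uncountable cardinal `κ` we have `b_κ = b^cl_κ`.
Here `κ` is represented as a well-ordered type `α` of regular uncountable cardinality
all of whose proper initial segments are of size `< #α`. -/
theorem bddUnbounding_eq_clubUnbounding {α : Type*} [LinearOrder α] [WellFoundedLT α]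
    (hreg : (#α).IsRegular) (hunc : ℵ₀ < #α)
    (hinit : ∀ a : α, #(Set.Iio a) < #α) :
    bddUnboundingNumber α = clubUnboundingNumber α := by
  haveI hnea : Nonempty α := by
    by_contra h
    rw [not_nonempty_iff] at h
    haveI := h
    rw [Cardinal.mk_eq_zero α] at hunc
    exact absurd hunc (not_lt.2 zero_le)
  have hgt : ∀ z : α, ∃ y, z < y := exists_gt' hreg hunc hinit
  have statUnbdd : ∀ x : Set α, IsStatIn x → ¬ BddAbove x := by
    intro x hx hbdd
    obtain ⟨u, hu⟩ := hbdd
    obtain ⟨a, hax, hau⟩ := hx (Ioi u) (isClubIn_Ioi hreg hunc hinit u)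
    exact absurd (hu hax) (not_le.2 hau)
  have hUnivStat : ∀ g : α → α, ∃ f ∈ (univ : Set (α → α)), IsStatIn {a : α | g a < f a} := by
    intro g
    refine ⟨fun a => Classical.choose (hgt (g a)), mem_univ _, ?_⟩
    intro C hC
    obtain ⟨b, hb, _⟩ := hC.2 (Classical.arbitrary α)
    exact ⟨b, Classical.choose_spec (hgt (g b)), hb⟩
  have hcne : {c : Cardinal | ∃ B : Set (α → α),
      (∀ g : α → α, ∃ f ∈ B, IsStatIn {a : α | g a < f a}) ∧ c = #B}.Nonempty :=
    ⟨#(univ : Set (α → α)), univ, hUnivStat, rfl⟩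
  have hbne : {c : Cardinal | ∃ B : Set (α → α),
      (∀ g : α → α, ∃ f ∈ B, ¬ BddAbove {a : α | g a < f a}) ∧ c = #B}.Nonempty :=
    ⟨#(univ : Set (α → α)), univ,
      fun g => (hUnivStat g).imp (fun f hf => ⟨hf.1, statUnbdd _ hf.2⟩), rfl⟩
  have h1 : bddUnboundingNumber α ≤ clubUnboundingNumber α := by
    obtain ⟨B, hB, hcard⟩ := csInf_mem hcne
    have hmem : #B ∈ {c : Cardinal | ∃ B : Set (α → α),
        (∀ g : α → α, ∃ f ∈ B, ¬ BddAbove {a : α | g a < f a}) ∧ c = #B} :=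
      ⟨B, fun g => (hB g).imp (fun f hf => ⟨hf.1, statUnbdd _ hf.2⟩), rfl⟩
    have hle : bddUnboundingNumber α ≤ #B := csInf_le (OrderBot.bddBelow _) hmem
    have heq : clubUnboundingNumber α = #B := hcard
    rw [heq]
    exact hle
  have h2 : clubUnboundingNumber α ≤ bddUnboundingNumber α := by
    by_contra hltc
    rw [not_le] at hltc
    obtain ⟨B, hB, hcard⟩ := csInf_mem hbne
    have key : ∀ G : Set (α → α), #G ≤ bddUnboundingNumber α →
        ∃ g : α → α, ∀ f ∈ G, ¬ IsStatIn {a : α | g a < f a} := by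
      intro G hG
      by_contra hg
      push_neg at hg
      have hmem : #G ∈ {c : Cardinal | ∃ B : Set (α → α),
          (∀ g : α → α, ∃ f ∈ B, IsStatIn {a : α | g a < f a}) ∧ c = #B} := ⟨G, hg, rfl⟩
      have : clubUnboundingNumber α ≤ #G := csInf_le (OrderBot.bddBelow _) hmem
      exact absurd (this.trans hG) (not_le.2 hltc)
    have notStat : ∀ (g u : α → α), ¬ IsStatIn {a : α | g a < u a} →
        ∃ C, IsClubIn C ∧ ∀ a ∈ C, u a ≤ g a := by
      intro g u h
      rw [IsStatIn] at h
      push_neg at h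
      obtain ⟨C, hC, hCe⟩ := h
      exact ⟨C, hC, fun a ha => not_lt.1 fun hlt' => eq_empty_iff_forall_notMem.1 hCe a ⟨hlt', ha⟩⟩
    have hφm : ∀ f : α → α, Monotone (hull (α := α) f) := hull_mono hreg hunc hinit
    have hφle : ∀ (f : α → α) (a : α), f a ≤ hull f a := le_hull hreg hunc hinit
    -- base stage
    have exBase : ∃ (g1 : α → α) (D1 : ↥B → Set α), Monotone g1 ∧ (∀ f, IsClubIn (D1 f)) ∧
        (∀ f : ↥B, ∀ a ∈ D1 f, hull f.1 a ≤ g1 a) := by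
      obtain ⟨g0, hg0⟩ := key (range fun f : ↥B => hull f.1) (mk_range_le.trans hcard.ge)
      have hch : ∀ f : ↥B, ∃ C, IsClubIn C ∧ ∀ a ∈ C, hull f.1 a ≤ g0 a := fun f =>
        notStat g0 (hull f.1) (hg0 _ ⟨f, rfl⟩)
      choose D1 hD1c hD1b using hch
      exact ⟨hull g0, D1, hφm g0, hD1c,
        fun f a ha => (hD1b f a ha).trans (hφle g0 a)⟩
    obtain ⟨g1, D1, hg1m, hD1c, hD1b⟩ := exBase
    -- iteration type
    let T := Σ' (g : α → α) (D : ↥B → Set α), Monotone g ∧ ∀ f, IsClubIn (D f)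
    have exStep : ∀ t : T, ∃ t' : T,
        (∀ a, t.1 a ≤ t'.1 a) ∧ (∀ f, t'.2.1 f ⊆ t.2.1 f) ∧
        (∀ f, ∀ a ∈ t'.2.1 f, nxt (t.2.1 f) a ≤ t'.1 a) := by
      intro t
      obtain ⟨g, D, hgmo, hDcl⟩ := t
      obtain ⟨g0, hg0⟩ := key (range fun f : ↥B => fun a => nxt (D f) a)
        (mk_range_le.trans hcard.ge)
      have hch : ∀ f : ↥B, ∃ C, IsClubIn C ∧ ∀ a ∈ C, nxt (D f) a ≤ g0 a := fun f =>
        notStat g0 _ (hg0 _ ⟨f, rfl⟩)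
      choose C hCc hCb using hch
      refine ⟨⟨fun a => max (hull g0 a) (g a), fun f => C f ∩ D f,
        fun a b hab => max_le_max (hφm g0 hab) (hgmo hab),
        fun f => IsClubIn.inter hreg hunc hinit (hCc f) (hDcl f)⟩,
        fun a => le_max_right _ _, fun f => inter_subset_right,
        fun f a ha => le_trans (le_trans (hCb f a ha.1) (hφle g0 a)) (le_max_left _ _)⟩
    choose step hstep1 hstep2 hstep3 using exStep
    let seq : ℕ → T := fun n => Nat.rec ⟨g1, D1, hg1m, hD1c⟩ (fun _ t => step t) n
    have hs1 : ∀ n a, (seq n).1 a ≤ (seq (n + 1)).1 a := fun n => hstep1 (seq n)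
    have hs2 : ∀ n f, (seq (n + 1)).2.1 f ⊆ (seq n).2.1 f := fun n => hstep2 (seq n)
    have hs3 : ∀ n f, ∀ a ∈ (seq (n + 1)).2.1 f, nxt ((seq n).2.1 f) a ≤ (seq (n + 1)).1 a :=
      fun n => hstep3 (seq n)
    have hgm : ∀ n, Monotone (seq n).1 := fun n => (seq n).2.2.1
    have hDc : ∀ n f, IsClubIn ((seq n).2.1 f) := fun n => (seq n).2.2.2
    have hseq0D : ∀ f, (seq 0).2.1 f = D1 f := fun f => rfl
    have hseq0g : (seq 0).1 = g1 := rfl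
    have hchain : ∀ (f : ↥B) (m n : ℕ), m ≤ n → (seq n).2.1 f ⊆ (seq m).2.1 f := by
      intro f m n h
      induction n, h using Nat.le_induction with
      | base => exact fun x hx => hx
      | succ n hn ih => exact fun x hx => ih (hs2 n f hx)
    let gw : α → α := fun a => lub (range fun n => (seq n).1 a)
    have hgwb : ∀ a : α, BddAbove (range fun n => (seq n).1 a) := fun a =>
      bddAbove_range_nat hreg hunc hinit _
    have hgwle : ∀ (n : ℕ) (a : α), (seq n).1 a ≤ gw a := fun n a => le_lub (hgwb a) ⟨n, rfl⟩
    have hgwm : Monotone gw := by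
      intro a b hab
      apply (isLUB_lub (hgwb a)).2
      rintro x ⟨n, rfl⟩
      exact ((hgm n) hab).trans (hgwle n b)
    let E : ↥B → Set α := fun f => ⋂ n, (seq n).2.1 f
    have hEc : ∀ f, IsClubIn (E f) := fun f =>
      isClubIn_iInter hreg hunc hinit (fun n => hDc n f)
    have hEsub : ∀ f n, E f ⊆ (seq n).2.1 f := fun f n x hx => mem_iInter.1 hx n
    have claimA : ∀ (f : ↥B) (d : α), d ∈ E f → ∃ d', d' ∈ E f ∧ d < d' ∧ d' ≤ gw d := by
      intro f d hd
      let p : ℕ → α := fun n => nxt ((seq n).2.1 f) d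
      have hpmem : ∀ n, p n ∈ (seq n).2.1 f := fun n => nxt_mem_club (hDc n f) d
      have hpgt : ∀ n, d < p n := fun n => lt_nxt_club (hDc n f) d
      have hpb : ∀ n, p n ≤ gw d := fun n =>
        (hs3 n f d (hEsub f (n + 1) hd)).trans (hgwle (n + 1) d)
      have hpm : Monotone p := fun m n h =>
        nxt_anti (hDc m f) (hDc n f) (hchain f m n h) d
      have hbddp : BddAbove (range p) := ⟨gw d, by rintro x ⟨n, rfl⟩; exact hpb n⟩
      have hlp : IsLUB (range p) (lub (range p)) := isLUB_lub hbddp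
      refine ⟨lub (range p), ?_, lt_of_lt_of_le (hpgt 0) (le_lub hbddp ⟨0, rfl⟩),
        hlp.2 (by rintro x ⟨n, rfl⟩; exact hpb n)⟩
      apply mem_iInter.2
      intro m
      apply (hDc m f).1 (p '' Ici m) ?_ ⟨p m, ⟨m, self_mem_Ici, rfl⟩⟩ _ ?_
      · rintro x ⟨k, hk, rfl⟩
        exact hchain f m k hk (hpmem k)
      · apply isLUB_cofinal hlp
        · rintro x ⟨k, _, rfl⟩; exact ⟨k, rfl⟩
        · intro j
          exact ⟨p (max j m), ⟨max j m, mem_Ici.2 (le_max_right _ _), rfl⟩, hpm (le_max_left _ _)⟩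
    have claimB : ∀ (f : ↥B) (a : α), (∃ e ∈ E f, e ≤ a) →
        ∃ c', c' ∈ E f ∧ a < c' ∧ c' ≤ gw a := by
      rintro f a ⟨e, he, hea⟩
      have hsne : (E f ∩ Iic a).Nonempty := ⟨e, he, hea⟩
      have hsbdd : BddAbove (E f ∩ Iic a) := ⟨a, fun x hx => hx.2⟩
      have hld : IsLUB (E f ∩ Iic a) (lub (E f ∩ Iic a)) := isLUB_lub hsbdd
      have hdE : lub (E f ∩ Iic a) ∈ E f := (hEc f).1 _ inter_subset_left hsne _ hld
      have hda : lub (E f ∩ Iic a) ≤ a := hld.2 (fun x hx => hx.2)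
      obtain ⟨d', hd'E, hdd', hd'g⟩ := claimA f _ hdE
      refine ⟨d', hd'E, ?_, hd'g.trans (hgwm hda)⟩
      by_contra hc
      rw [not_lt] at hc
      exact absurd (hld.1 ⟨hd'E, hc⟩) (not_le.2 hdd')
    obtain ⟨f, hfB, hfu⟩ := hB (fun a => g1 (gw a))
    apply hfu
    have hEne : (E ⟨f, hfB⟩).Nonempty := by
      obtain ⟨b, hb, _⟩ := (hEc ⟨f, hfB⟩).2 (Classical.arbitrary α)
      exact ⟨b, hb⟩
    obtain ⟨e0, he0⟩ := hEne
    refine ⟨e0, ?_⟩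
    intro a ha
    by_contra hae
    rw [not_le] at hae
    obtain ⟨c', hc'E, hac', hc'g⟩ := claimB ⟨f, hfB⟩ a ⟨e0, he0, hae.le⟩
    have hfa : f a ≤ g1 (gw a) := by
      calc f a ≤ hull f a := hφle f a
      _ ≤ hull f c' := hφm f hac'.le
      _ ≤ g1 c' := hD1b ⟨f, hfB⟩ c' (hEsub ⟨f, hfB⟩ 0 hc'E)
      _ ≤ g1 (gw a) := hg1m hc'g
    exact absurd ha (not_lt.2 hfa)
  exact le_antisymm h1 h2
end

section
/- For every regular uncountable cardinal κ there exists a maximal stationary almost disjoint family on κ of cardinality exactly κ; consequently the stationary almost disjointness number a^cl_κ (the least cardinality of a maximal stationary almost disjoint family of size at least κ) equals κ. -/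
open Set Cardinal

/-- `A` is a stationary almost disjoint family: a family of stationary sets whose
pairwise intersections are non-stationary. -/
def IsSADFamily {α : Type*} [LinearOrder α] (A : Set (Set α)) : Prop :=
  (∀ x ∈ A, IsStatIn x) ∧ ∀ x ∈ A, ∀ y ∈ A, x ≠ y → ¬ IsStatIn (x ∩ y)

/-- `A` is a maximal stationary almost disjoint family: no stationary set is
stationary almost disjoint from every member of `A`. -/
def IsMaxSADFamily {α : Type*} [LinearOrder α] (A : Set (Set α)) : Prop :=
  IsSADFamily A ∧ ∀ z : Set α, IsStatIn z → ∃ x ∈ A, IsStatIn (z ∩ x)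

/-- The stationary almost disjointness number `a^cl_κ`: the least cardinality of a maximal
stationary almost disjoint family of size at least `κ`. -/
noncomputable def statADNumber (α : Type*) [LinearOrder α] : Cardinal :=
  sInf { c : Cardinal | ∃ A : Set (Set α), IsMaxSADFamily A ∧ #α ≤ #A ∧ c = #A }

namespace SADAux

universe u

variable {α : Type u} [LinearOrder α] [WellFoundedLT α]

/-- In a well-order, every nonempty bounded-above set has a least upper bound. -/
lemma exists_isLUB {s : Set α} (hne : s.Nonempty) (hbd : BddAbove s) : ∃ a, IsLUB s a := by
  obtain ⟨b, hb⟩ := hbd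
  obtain ⟨m, hm, hmin⟩ := (wellFounded_lt (α := α)).has_min (upperBounds s) ⟨b, hb⟩
  exact ⟨m, hm, fun c hc => not_lt.1 (hmin c hc)⟩

set_option linter.unusedSectionVars false

variable (hreg : (#α).IsRegular) (hunc : ℵ₀ < #α)
    (hinit : ∀ a : α, #(Set.Iio a) < #α)

include hinit hunc in
lemma mk_Iic_lt (a : α) : #(Set.Iic a) < #α := by
  have h1 : Set.Iic a = Set.Iio a ∪ {a} := by ext y; simp [le_iff_lt_or_eq]
  have h2 : #(Set.Iic a) ≤ #(Set.Iio a) + 1 := by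
    rw [h1]; simpa using Cardinal.mk_union_le (Set.Iio a) {a}
  exact h2.trans_lt (Cardinal.add_lt_of_lt hunc.le (hinit a)
    (lt_of_lt_of_le Cardinal.one_lt_aleph0 hunc.le))

include hunc hinit in
lemma type_eq : Ordinal.type ((· < ·) : α → α → Prop) = (#α).ord := by
  refine le_antisymm ?_ (Cardinal.ord_le.2 (Ordinal.card_type _).ge)
  by_contra h
  push_neg at h
  obtain ⟨a, ha⟩ := Ordinal.typein_surj ((· < ·) : α → α → Prop) h
  have h2 : #(Set.Iio a) = #α := by
    have := Ordinal.card_typein (r := ((· < ·) : α → α → Prop)) a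
    rw [ha] at this
    simp [Cardinal.card_ord] at this
    exact this.symm
  exact absurd h2 (hinit a).ne

include hreg hunc hinit in
lemma bddAbove_of_lt {s : Set α} (hs : #s < #α) : BddAbove s := by
  by_contra h
  have hu : Set.Unbounded ((· < ·) : α → α → Prop) s := by
    intro a
    rw [bddAbove_def] at h
    push_neg at h
    obtain ⟨x, hx, hax⟩ := h a
    exact ⟨x, hx, not_lt.2 hax.le⟩
  have := Ordinal.cof_type_le (s := s) (fun a => (hu a).imp fun x hx => ⟨hx.1, not_lt.1 hx.2⟩)
  rw [← Ordinal.cof_type, type_eq hunc hinit, hreg.cof_eq] at this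
  exact absurd this hs.not_ge

include hunc hinit in
lemma exists_gt (a : α) : ∃ b, a < b := by
  by_contra h
  push_neg at h
  have heq : (Set.univ : Set α) = Set.Iic a := by ext x; simp [h x]
  have h2 : #α ≤ #(Set.Iic a) := by
    rw [← heq]; simp
  exact (mk_Iic_lt hunc hinit a).not_ge h2

include hunc hinit in
lemma univ_club : IsClubIn (Set.univ : Set α) :=
  ⟨fun _ _ _ _ _ => trivial, fun a => (exists_gt hunc hinit a).imp fun _ h => ⟨trivial, h⟩⟩

include hunc hinit in
lemma Ioi_club (a : α) : IsClubIn (Set.Ioi a) := by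
  constructor
  · rintro s hs ⟨x, hx⟩ b hb
    exact lt_of_lt_of_le (hs hx) (hb.1 hx)
  · intro b
    obtain ⟨c, hc⟩ := exists_gt hunc hinit (max a b)
    exact ⟨c, (le_max_left a b).trans_lt hc, (le_max_right a b).trans_lt hc⟩

lemma not_stat_iff (x : Set α) : ¬ IsStatIn x ↔ ∃ c, IsClubIn c ∧ x ∩ c = ∅ := by
  unfold IsStatIn
  push_neg
  simp [Set.not_nonempty_iff_eq_empty]

lemma stat_mono {x y : Set α} (h : x ⊆ y) (hx : IsStatIn x) : IsStatIn y :=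
  fun c hc => ((hx c hc).mono (Set.inter_subset_inter_left c h))

include hunc hinit in
lemma not_stat_empty : ¬ IsStatIn (∅ : Set α) := by
  intro h
  simpa using h Set.univ (univ_club hunc hinit)

include hunc hinit in
lemma stat_nonempty {x : Set α} (hx : IsStatIn x) : x.Nonempty :=
  (hx Set.univ (univ_club hunc hinit)).mono Set.inter_subset_left

include hreg hunc hinit in
lemma inter_clubs {ι : Type u} (C : ι → Set α) (hsmall : #ι < #α)
    (hC : ∀ i, IsClubIn (C i)) : IsClubIn (⋂ i, C i) := by
  classical
  constructor
  · intro s hs hne a ha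
    exact Set.mem_iInter.2 fun i =>
      (hC i).1 s (hs.trans (Set.iInter_subset _ i)) hne a ha
  · intro a
    choose nxt hn1 hn2 using fun (i : ι) (b : α) => (hC i).2 b
    have hstep : ∀ b : α, ∃ c : α, b < c ∧ ∀ i, nxt i b ≤ c := by
      intro b
      have hr : #(Set.range fun i => nxt i b) < #α := (Cardinal.mk_range_le).trans_lt hsmall
      obtain ⟨u, hu⟩ := bddAbove_of_lt hreg hunc hinit hr
      obtain ⟨c, hc⟩ := exists_gt hunc hinit (max b u)
      exact ⟨c, (le_max_left b u).trans_lt hc,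
        fun i => ((hu (Set.mem_range_self i)).trans (le_max_right b u)).trans hc.le⟩
    choose g hg1 hg2 using hstep
    set x : ℕ → α := fun n => g^[n] (g a) with hx
    have hxs : ∀ n, x (n + 1) = g (x n) := fun n => Function.iterate_succ_apply' g n (g a)
    have hmono : StrictMono x := strictMono_nat_of_lt_succ fun n => by
      rw [hxs]; exact hg1 (x n)
    have hcnt : #(Set.range x) < #α := by
      have := (Set.countable_range x).to_subtype
      exact lt_of_le_of_lt Cardinal.mk_le_aleph0 hunc
    obtain ⟨ℓ, hℓ⟩ := exists_isLUB ⟨x 0, Set.mem_range_self 0⟩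
      (bddAbove_of_lt hreg hunc hinit hcnt)
    refine ⟨ℓ, Set.mem_iInter.2 fun i => ?_, ?_⟩
    · refine (hC i).1 (Set.range fun n => nxt i (x n))
        (Set.range_subset_iff.2 fun n => hn1 i (x n)) ⟨_, Set.mem_range_self 0⟩ ℓ ⟨?_, ?_⟩
      · rintro _ ⟨n, rfl⟩
        exact (hg2 (x n) i).trans ((hxs n).symm ▸ hℓ.1 (Set.mem_range_self (n + 1)))
      · intro b hb
        refine hℓ.2 ?_
        rintro _ ⟨n, rfl⟩
        exact le_of_lt (lt_of_lt_of_le (hn2 i (x n)) (hb (Set.mem_range_self n)))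
    · calc a < g a := hg1 a
        _ ≤ ℓ := hℓ.1 (Set.mem_range_self 0)

include hreg hunc hinit in
lemma inter2_clubs {c d : Set α} (hc : IsClubIn c) (hd : IsClubIn d) : IsClubIn (c ∩ d) := by
  classical
  have h := inter_clubs hreg hunc hinit (fun i : ULift.{u} Bool => if i.down then c else d)
    (by
      simp only [Cardinal.mk_uLift, Cardinal.mk_fintype]
      have h2 : ((2 : ℕ) : Cardinal) < #α := lt_of_lt_of_le (Cardinal.nat_lt_aleph0 2) hunc.le
      exact_mod_cast h2) (fun i => by by_cases h : i.down <;> simp [h, hc, hd])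
  have he : (⋂ i : ULift.{u} Bool, if i.down then c else d) = c ∩ d := by
    ext b
    constructor
    · intro hb
      have h1 := Set.mem_iInter.1 hb ⟨true⟩
      have h2 := Set.mem_iInter.1 hb ⟨false⟩
      simp only [if_true, if_false] at h1 h2
      exact ⟨h1, h2⟩
    · intro hb
      refine Set.mem_iInter.2 fun i => ?_
      by_cases hi : i.down <;> simp [hi, hb.1, hb.2]
  rwa [he] at h

/-- The diagonal intersection of an `α`-indexed family. -/
def diagInter (D : α → Set α) : Set α := {b | ∀ γ, γ < b → b ∈ D γ}

include hreg hunc hinit in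
lemma diag_club (D : α → Set α) (hD : ∀ γ, IsClubIn (D γ)) : IsClubIn (diagInter D) := by
  classical
  constructor
  · intro s hs hne a ha
    intro γ hγ
    have hne' : (s ∩ Set.Ioi γ).Nonempty := by
      by_contra h
      rw [Set.not_nonempty_iff_eq_empty] at h
      have : γ ∈ upperBounds s := by
        intro x hx
        by_contra hgx
        have hmem : x ∈ s ∩ Set.Ioi γ := ⟨hx, not_le.1 hgx⟩
        rw [h] at hmem
        exact hmem
      exact absurd (ha.2 this) (not_le.2 hγ)
    refine (hD γ).1 (s ∩ Set.Ioi γ) ?_ hne' a ⟨?_, ?_⟩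
    · intro x hx
      exact hs hx.1 γ hx.2
    · exact fun x hx => ha.1 hx.1
    · intro b hb
      have hub : max γ b ∈ upperBounds s := by
        intro x hx
        rcases le_or_gt x γ with h | h
        · exact h.trans (le_max_left γ b)
        · exact (hb ⟨hx, h⟩).trans (le_max_right γ b)
      have := ha.2 hub
      rcases max_cases γ b with ⟨he, _⟩ | ⟨he, _⟩ <;> rw [he] at this
      · exact absurd this (not_le.2 hγ)
      · exact this
  · intro a
    have hstep : ∀ b : α, ∃ c : α, b < c ∧ ∀ γ ≤ b, c ∈ D γ := by
      intro b
      have hsub : #(Set.Iic b) < #α := mk_Iic_lt hunc hinit b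
      have hcl : IsClubIn (⋂ γ : Set.Iic b, D γ) :=
        inter_clubs hreg hunc hinit _ hsub (fun γ => hD γ)
      obtain ⟨c, hc1, hc2⟩ := hcl.2 b
      exact ⟨c, hc2, fun γ hγ => Set.mem_iInter.1 hc1 ⟨γ, hγ⟩⟩
    choose g hg1 hg2 using hstep
    set x : ℕ → α := fun n => g^[n] (g a) with hx
    have hxs : ∀ n, x (n + 1) = g (x n) := fun n => Function.iterate_succ_apply' g n (g a)
    have hmono : StrictMono x := strictMono_nat_of_lt_succ fun n => by
      rw [hxs]; exact hg1 (x n)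
    have hcnt : #(Set.range x) < #α := by
      have := (Set.countable_range x).to_subtype
      exact lt_of_le_of_lt Cardinal.mk_le_aleph0 hunc
    obtain ⟨ℓ, hℓ⟩ := exists_isLUB ⟨x 0, Set.mem_range_self 0⟩
      (bddAbove_of_lt hreg hunc hinit hcnt)
    refine ⟨ℓ, ?_, ?_⟩
    · intro γ hγ
      obtain ⟨n, hn⟩ : ∃ n, γ ≤ x n := by
        by_contra h
        push_neg at h
        exact absurd (hℓ.2 fun _ ⟨n, he⟩ => he ▸ (h n).le) (not_le.2 hγ)
      refine (hD γ).1 (Set.range fun k => x (n + 1 + k)) ?_ ⟨_, Set.mem_range_self 0⟩ ℓ ⟨?_, ?_⟩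
      · rintro _ ⟨k, rfl⟩
        have : x (n + k + 1) = g (x (n + k)) := hxs (n + k)
        have hge : γ ≤ x (n + k) := hn.trans (hmono.monotone (Nat.le_add_right n k))
        have : x (n + 1 + k) ∈ D γ := by
          rw [show n + 1 + k = n + k + 1 by omega, hxs (n + k)]
          exact hg2 (x (n + k)) γ hge
        exact this
      · rintro _ ⟨k, rfl⟩
        exact hℓ.1 (Set.mem_range_self _)
      · intro b hb
        refine hℓ.2 ?_
        rintro _ ⟨m, rfl⟩
        exact (hmono.monotone (by omega : m ≤ n + 1 + m)).trans (hb (Set.mem_range_self m))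
    · calc a < g a := hg1 a
        _ ≤ ℓ := hℓ.1 (Set.mem_range_self 0)

include hreg hunc hinit in
lemma fodor {T : Set α} (hT : IsStatIn T) (f : α → α) (hf : ∀ b ∈ T, f b < b) :
    ∃ γ, IsStatIn (T ∩ f ⁻¹' {γ}) := by
  by_contra h
  push_neg at h
  choose D hD1 hD2 using fun γ => (not_stat_iff _).1 (h γ)
  obtain ⟨b, hbT, hbΔ⟩ := hT _ (diag_club hreg hunc hinit D hD1)
  have hb : b ∈ D (f b) := hbΔ _ (hf b hbT)
  have : b ∈ (T ∩ f ⁻¹' {f b}) ∩ D (f b) := ⟨⟨hbT, rfl⟩, hb⟩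
  rw [hD2 (f b)] at this
  exact this

include hreg hunc hinit in
lemma omegaPt_stat :
    IsStatIn {b : α | ∃ g : ℕ → α, StrictMono g ∧ IsLUB (Set.range g) b} := by
  intro c hc
  have hne : Nonempty α :=
    Cardinal.mk_ne_zero_iff.1 (Cardinal.aleph0_pos.trans hunc).ne' 
  obtain ⟨a0⟩ := hne
  choose nxt hn1 hn2 using hc.2
  set x : ℕ → α := fun n => nxt^[n] (nxt a0) with hx
  have hxs : ∀ n, x (n + 1) = nxt (x n) := fun n => Function.iterate_succ_apply' nxt n (nxt a0)
  have hmono : StrictMono x := strictMono_nat_of_lt_succ fun n => by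
    rw [hxs]; exact hn2 (x n)
  have hxc : ∀ n, x n ∈ c := by
    intro n
    cases n with
    | zero => exact hn1 a0
    | succ m => rw [hxs]; exact hn1 (x m)
  have hcnt : #(Set.range x) < #α := by
    have := (Set.countable_range x).to_subtype
    exact lt_of_le_of_lt Cardinal.mk_le_aleph0 hunc
  obtain ⟨ℓ, hℓ⟩ := exists_isLUB ⟨x 0, Set.mem_range_self 0⟩
    (bddAbove_of_lt hreg hunc hinit hcnt)
  refine ⟨ℓ, ⟨x, hmono, hℓ⟩, ?_⟩
  exact hc.1 (Set.range x) (Set.range_subset_iff.2 hxc) ⟨x 0, Set.mem_range_self 0⟩ ℓ hℓ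

include hreg hunc hinit in
lemma solovay : ∃ (S : Set α) (F : α → α),
    (∀ b ∈ S, F b < b) ∧ ∀ β : α, IsStatIn {b ∈ S | β ≤ F b} := by
  classical
  set S : Set α := {b : α | ∃ g : ℕ → α, StrictMono g ∧ IsLUB (Set.range g) b} with hS
  have hSstat : IsStatIn S := omegaPt_stat hreg hunc hinit
  choose! f hf1 hf2 using fun (b : α) (hb : b ∈ S) => hb
  have hflt : ∀ b ∈ S, ∀ n, f b n < b := by
    intro b hb n
    exact lt_of_lt_of_le (hf1 b hb n.lt_succ_self) ((hf2 b hb).1 (Set.mem_range_self (n + 1)))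
  have hclaim : ∃ n : ℕ, ∀ β : α, IsStatIn {b ∈ S | β ≤ f b n} := by
    by_contra h
    push_neg at h
    choose β hβ using h
    choose c hc1 hc2 using fun n => (not_stat_iff _).1 (hβ n)
    have hcc : IsClubIn (⋂ i : ULift.{u} ℕ, c i.down) := by
      refine inter_clubs hreg hunc hinit _ ?_ (fun i => hc1 i.down)
      simpa using hunc
    have hβbd : #(Set.range β) < #α := by
      have := (Set.countable_range β).to_subtype
      exact lt_of_le_of_lt Cardinal.mk_le_aleph0 hunc
    obtain ⟨u, hu⟩ := bddAbove_of_lt hreg hunc hinit hβbd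
    have hclub : IsClubIn ((⋂ i : ULift.{u} ℕ, c i.down) ∩ Set.Ioi u) :=
      inter2_clubs hreg hunc hinit hcc (Ioi_club hunc hinit u)
    obtain ⟨b, hbS, hbm⟩ := hSstat _ hclub
    have hub : b ≤ u := by
      refine (hf2 b hbS).2 ?_
      rintro _ ⟨n, rfl⟩
      have hbc : b ∈ c n := Set.mem_iInter.1 hbm.1 ⟨n⟩
      have : f b n < β n := by
        by_contra hge
        have : b ∈ ({b ∈ S | β n ≤ f b n} ∩ c n) := ⟨⟨hbS, not_lt.1 hge⟩, hbc⟩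
        rw [hc2 n] at this
        exact this
      exact this.le.trans (hu (Set.mem_range_self n))
    exact absurd hbm.2 (not_lt.2 hub)
  obtain ⟨n, hn⟩ := hclaim
  exact ⟨S, fun b => f b n, fun b hb => hflt b hb n, hn⟩

include hreg hunc hinit in
lemma exists_max_family : ∃ A : Set (Set α), IsMaxSADFamily A ∧ #A = #α := by
  classical
  obtain ⟨S, F, hFreg, hstat⟩ := solovay hreg hunc hinit
  set T : α → Set α := fun γ => S ∩ F ⁻¹' {γ} with hT
  set G : Set α := {γ | IsStatIn (T γ)} with hG
  have hGub : ∀ β : α, ∃ γ ∈ G, β < γ := by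
    intro β
    obtain ⟨β', hβ'⟩ := exists_gt hunc hinit β
    have hT' : IsStatIn {b ∈ S | β' ≤ F b} := hstat β'
    obtain ⟨γ, hγ⟩ := fodor hreg hunc hinit hT' F (fun b hb => hFreg b hb.1)
    have hsub : {b ∈ S | β' ≤ F b} ∩ F ⁻¹' {γ} ⊆ T γ := fun b hb => ⟨hb.1.1, hb.2⟩
    have hγG : γ ∈ G := stat_mono hsub hγ
    obtain ⟨b, hb⟩ := stat_nonempty hunc hinit hγ
    have he : F b = γ := hb.2
    exact ⟨γ, hγG, hβ'.trans_le (he ▸ hb.1.2)⟩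
  have hGcard : #G = #α := by
    refine le_antisymm (Cardinal.mk_set_le G) ?_
    by_contra h
    push_neg at h
    obtain ⟨u, hu⟩ := bddAbove_of_lt hreg hunc hinit h
    obtain ⟨γ, hγG, hγu⟩ := hGub u
    exact absurd (hu hγG) (not_le.2 hγu)
  have hGne : G.Nonempty := by
    obtain ⟨a0⟩ := Cardinal.mk_ne_zero_iff.1 (Cardinal.aleph0_pos.trans hunc).ne'
    obtain ⟨γ, hγ, _⟩ := hGub a0
    exact ⟨γ, hγ⟩
  obtain ⟨γ0, hγ0⟩ := hGne
  set R : Set α := {b | ∀ γ ∈ G, b ∉ T γ} with hR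
  set piece : α → Set α := fun γ => T γ ∪ {b | b ∈ R ∧ γ = γ0} with hpiece
  have hTsub : ∀ γ, T γ ⊆ piece γ := fun γ => Set.subset_union_left
  have hdisj : ∀ γ1 ∈ G, ∀ γ2 ∈ G, γ1 ≠ γ2 → piece γ1 ∩ piece γ2 = ∅ := by
    intro γ1 h1 γ2 h2 hne12
    ext b
    simp only [Set.mem_inter_iff, Set.mem_empty_iff_false, iff_false, not_and]
    rintro (hb1 | hb1) (hb2 | hb2)
    · exact hne12 (hb1.2.symm.trans hb2.2)
    · exact hb2.1 γ1 h1 hb1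
    · exact hb1.1 γ2 h2 hb2
    · exact hne12 (hb1.2.trans hb2.2.symm)
  have hinj : Set.InjOn piece G := by
    intro γ1 h1 γ2 h2 he
    by_contra hne12
    obtain ⟨x, hx⟩ := stat_nonempty hunc hinit (h1 : IsStatIn (T γ1))
    have hx1 : x ∈ piece γ1 ∩ piece γ2 := ⟨hTsub γ1 hx, he ▸ hTsub γ1 hx⟩
    rw [hdisj γ1 h1 γ2 h2 hne12] at hx1
    exact hx1
  refine ⟨piece '' G, ⟨⟨?_, ?_⟩, ?_⟩, ?_⟩
  · rintro x ⟨γ, hγ, rfl⟩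
    exact stat_mono (hTsub γ) hγ
  · rintro x ⟨γ1, h1, rfl⟩ y ⟨γ2, h2, rfl⟩ hxy
    have hne12 : γ1 ≠ γ2 := fun h => hxy (by rw [h])
    rw [hdisj γ1 h1 γ2 h2 hne12]
    exact not_stat_empty hunc hinit
  · intro z hz
    by_contra h
    push_neg at h
    have h' : ∀ γ : α, ∃ D, IsClubIn D ∧ (γ ∈ G → (z ∩ piece γ) ∩ D = ∅) := by
      intro γ
      by_cases hγ : γ ∈ G
      · obtain ⟨D, hD, hDe⟩ := (not_stat_iff _).1 (h (piece γ) ⟨γ, hγ, rfl⟩)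
        exact ⟨D, hD, fun _ => hDe⟩
      · exact ⟨Set.univ, univ_club hunc hinit, fun hg => absurd hg hγ⟩
    choose D hD1 hD2 using h'
    have hΔ : IsClubIn (diagInter D ∩ Set.Ioi γ0) :=
      inter2_clubs hreg hunc hinit (diag_club hreg hunc hinit D hD1) (Ioi_club hunc hinit γ0)
    obtain ⟨b, hbz, hbΔ, hbγ0⟩ := hz _ hΔ
    by_cases hb : ∃ γ ∈ G, b ∈ T γ
    · obtain ⟨γ, hγG, hbT⟩ := hb
      have hlt : γ < b := by
        have he : F b = γ := hbT.2
        exact he ▸ hFreg b hbT.1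
      have hmem : b ∈ (z ∩ piece γ) ∩ D γ := ⟨⟨hbz, hTsub γ hbT⟩, hbΔ γ hlt⟩
      rw [hD2 γ hγG] at hmem
      exact hmem
    · push_neg at hb
      have hbR : b ∈ R := hb
      have hmem : b ∈ (z ∩ piece γ0) ∩ D γ0 :=
        ⟨⟨hbz, Or.inr ⟨hbR, rfl⟩⟩, hbΔ γ0 hbγ0⟩
      rw [hD2 γ0 hγ0] at hmem
      exact hmem
  · rw [Cardinal.mk_image_eq_of_injOn piece G hinj]
    exact hGcard

end SADAux

/-- For every regular uncountable cardinal `κ` there is a maximal stationary almost disjoint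
family of cardinality exactly `κ`; consequently `a^cl_κ = κ`.
Here `κ` is represented as a well-ordered type `α` of regular uncountable cardinality
all of whose proper initial segments are of size `< #α`. -/
theorem statADNumber_eq {α : Type*} [LinearOrder α] [WellFoundedLT α]
    (hreg : (#α).IsRegular) (hunc : ℵ₀ < #α)
    (hinit : ∀ a : α, #(Set.Iio a) < #α) :
    (∃ A : Set (Set α), IsMaxSADFamily A ∧ #A = #α) ∧ statADNumber α = #α := by
  obtain ⟨A, hmax, hcard⟩ := SADAux.exists_max_family hreg hunc hinit
  refine ⟨⟨A, hmax, hcard⟩, ?_⟩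
  have hmem : #α ∈ {c : Cardinal | ∃ A : Set (Set α), IsMaxSADFamily A ∧ #α ≤ #A ∧ c = #A} :=
    ⟨A, hmax, hcard.ge, hcard.symm⟩
  refine le_antisymm (csInf_le' hmem) (le_csInf ⟨_, hmem⟩ ?_)
  rintro c ⟨A', _, h2, rfl⟩
  exact h2
end

section
/- Let κ be a regular uncountable cardinal. If ◊_κ holds, then there exists a maximal stationary almost disjoint family on κ of cardinality 2^κ. -/
open Set Cardinal

/-- The diamond principle `◊_κ`: there is a sequence `(s i)_{i<κ}` with `s i ⊆ i` such that
for every `y ⊆ κ` the set `{i < κ : y ∩ i = s i}` is stationary. -/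
def DiamondIn (α : Type*) [LinearOrder α] : Prop :=
  ∃ s : α → Set α, (∀ i : α, s i ⊆ Set.Iio i) ∧
    ∀ y : Set α, IsStatIn {i : α | y ∩ Set.Iio i = s i}

/-- If `κ` is regular uncountable and `◊_κ` holds, then there is a maximal stationary
almost disjoint family of cardinality `2^κ`. Here `κ` is represented as a well-ordered type
`α` of regular uncountable cardinality all of whose proper initial segments are of size
`< #α`. -/
theorem exists_maxSAD_of_diamond {α : Type*} [LinearOrder α] [WellFoundedLT α]
    (hreg : (#α).IsRegular) (hunc : ℵ₀ < #α)
    (hinit : ∀ a : α, #(Set.Iio a) < #α)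
    (hdiamond : DiamondIn α) :
    ∃ A : Set (Set α), IsMaxSADFamily A ∧ #A = 2 ^ #α := by
  obtain ⟨s, hssub, hstat⟩ := hdiamond
  -- no maximal element
  have hexgt : ∀ a : α, ∃ b, a < b := by
    intro a
    by_contra h
    push_neg at h
    have huniv : (Set.Iic a) = Set.univ := Set.eq_univ_of_forall h
    have h1 : #α ≤ #(Set.Iio a) + 1 := by
      have : #(Set.Iic a) = #(Set.Iio a) + 1 := by
        rw [show Set.Iic a = insert a (Set.Iio a) by
          ext x; simp [le_iff_lt_or_eq, or_comm]]
        exact Cardinal.mk_insert (by simp)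
      rw [huniv, Cardinal.mk_univ] at this
      exact this.le
    have h2 : #(Set.Iio a) + 1 < #α :=
      Cardinal.add_lt_of_lt hunc.le (hinit a) (one_lt_aleph0.trans hunc)
    exact absurd (h1.trans_lt h2) (lt_irrefl _)
  have hclub : ∀ a : α, IsClubIn (Set.Ioi a) := by
    intro a
    constructor
    · intro t ht hne b hb
      obtain ⟨x, hx⟩ := hne
      exact lt_of_lt_of_le (ht hx) (hb.1 hx)
    · intro b
      obtain ⟨c, hc⟩ := hexgt (max a b)
      exact ⟨c, lt_of_le_of_lt (le_max_left a b) hc, lt_of_le_of_lt (le_max_right a b) hc⟩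
  have hbdd : ∀ (x : Set α) (a : α), (∀ i ∈ x, i ≤ a) → ¬ IsStatIn x := by
    intro x a hle hstatx
    obtain ⟨i, hix, hia⟩ := hstatx (Set.Ioi a) (hclub a)
    exact absurd (hle i hix) (not_le.mpr hia)
  set S : Set α → Set α := fun y => {i | y ∩ Set.Iio i = s i} with hSdef
  have hSstat : ∀ y, IsStatIn (S y) := hstat
  have hdisj : ∀ y y', y ≠ y' → ¬ IsStatIn (S y ∩ S y') := by
    intro y y' hne
    obtain ⟨a, ha⟩ : ∃ a, a ∈ (y \ y') ∪ (y' \ y) := by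
      by_contra h
      push_neg at h
      apply hne
      ext b
      constructor <;> intro hb <;> by_contra hb'
      · exact h b (Or.inl ⟨hb, hb'⟩)
      · exact h b (Or.inr ⟨hb, hb'⟩)
    apply hbdd _ a
    intro i hi
    by_contra hlt
    push_neg at hlt
    have h1 : y ∩ Set.Iio i = y' ∩ Set.Iio i := hi.1.trans hi.2.symm
    rcases ha with ⟨hay, hay'⟩ | ⟨hay', hay⟩
    · have : a ∈ y' ∩ Set.Iio i := by rw [← h1]; exact ⟨hay, hlt⟩
      exact hay' this.1
    · have : a ∈ y ∩ Set.Iio i := by rw [h1]; exact ⟨hay', hlt⟩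
      exact hay this.1
  have hSinj : Function.Injective S := by
    intro y y' h
    by_contra hne
    have h2 := hdisj y y' hne
    rw [h, Set.inter_self] at h2
    exact h2 (hSstat y')
  set P : Set (Set (Set α)) := {A | IsSADFamily A ∧ Set.range S ⊆ A} with hPdef
  have hmem : Set.range S ∈ P := by
    refine ⟨⟨?_, ?_⟩, subset_rfl⟩
    · rintro x ⟨y, rfl⟩; exact hSstat y
    · rintro x ⟨y, rfl⟩ x' ⟨y', rfl⟩ hne
      exact hdisj y y' (fun h => hne (by rw [h]))
  have hchain : ∀ c ⊆ P, IsChain (· ⊆ ·) c → c.Nonempty →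
      ∃ ub ∈ P, ∀ t ∈ c, t ⊆ ub := by
    intro c hcP hchain ⟨B0, hB0⟩
    refine ⟨⋃₀ c, ⟨⟨?_, ?_⟩, ?_⟩, fun t ht => Set.subset_sUnion_of_mem ht⟩
    · rintro x ⟨B, hBc, hxB⟩
      exact (hcP hBc).1.1 x hxB
    · rintro x ⟨B, hBc, hxB⟩ x' ⟨B', hB'c, hx'B'⟩ hne
      rcases hchain.total hBc hB'c with hsub | hsub
      · exact (hcP hB'c).1.2 x (hsub hxB) x' hx'B' hne
      · exact (hcP hBc).1.2 x hxB x' (hsub hx'B') hne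
    · exact (hcP hB0).2.trans (Set.subset_sUnion_of_mem hB0)
  obtain ⟨A, hsubA, hAP, hAmax⟩ := zorn_subset_nonempty P hchain _ hmem
  refine ⟨A, ⟨hAP.1, ?_⟩, ?_⟩
  · intro z hz
    by_contra h
    push_neg at h
    have hzA : z ∉ A := fun hzA => h z hzA (by rwa [Set.inter_self])
    have hins : insert z A ∈ P := by
      refine ⟨⟨?_, ?_⟩, hAP.2.trans (Set.subset_insert _ _)⟩
      · rintro x (rfl | hx)
        · exact hz
        · exact hAP.1.1 x hx
      · rintro x (rfl | hx) x' (rfl | hx') hne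
        · exact absurd rfl hne
        · exact h x' hx'
        · rw [Set.inter_comm]; exact h x hx
        · exact hAP.1.2 x hx x' hx' hne
    have := hAmax hins (Set.subset_insert z A)
    exact hzA (this (Set.mem_insert z A))
  · have h1 : #(Set α) ≤ #A := by
      rw [← Cardinal.mk_range_eq S hSinj]
      exact Cardinal.mk_le_mk_of_subset hAP.2
    have h2 : #A ≤ #(Set α) := by
      have := Cardinal.mk_le_mk_of_subset (Set.subset_univ A)
      rwa [Cardinal.mk_univ] at this
    rw [le_antisymm h2 h1, Cardinal.mk_set]
end

section
/- Let κ be a regular uncountable cardinal, let E^κ_ω = {k < κ : cf(k) = ω}, and for every k ∈ E^κ_ω fix a sequence (j^k_n)_{n<ω} cofinal in k. Then there exists n* < ω such that for every i < κ the set {k ∈ E^κ_ω : j^k_{n*} ≥ i} is stationary in κ. -/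
open Set Cardinal

/-- `k` has cofinality `ω`: it is a limit point (nonzero with no maximum below it) which is
the supremum of a countable sequence of smaller elements. The set of all such `k` is `E^κ_ω`. -/
def HasCofOmega {α : Type*} [LinearOrder α] (k : α) : Prop :=
  (∃ m, m < k) ∧ (∀ m < k, ∃ i, m < i ∧ i < k) ∧
    ∃ g : ℕ → α, (∀ n, g n < k) ∧ ∀ i < k, ∃ n, i ≤ g n

section Aux
variable {α : Type*} [LinearOrder α] [WellFoundedLT α]

lemma aux_exists_isLUB {s : Set α} (hne : s.Nonempty) (hbdd : BddAbove s) :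
    ∃ b, IsLUB s b := by
  obtain ⟨u, hu⟩ := hbdd
  have hU : (upperBounds s).Nonempty := ⟨u, hu⟩
  refine ⟨wellFounded_lt.min _ hU, wellFounded_lt.min_mem _ hU, fun v hv => ?_⟩
  exact not_lt.1 (wellFounded_lt.not_lt_min _ hv)

lemma aux_bddAbove_range (hreg : (#α).IsRegular) (hunc : ℵ₀ < #α)
    (hinit : ∀ a : α, #(Set.Iio a) < #α) (f : ℕ → α) : BddAbove (Set.range f) := by
  by_contra h
  have hcov : (Set.univ : Set α) ⊆ ⋃ n : ULift.{_} ℕ, Set.Iio (f n.down) := by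
    intro x _
    rcases not_bddAbove_iff.1 h x with ⟨y, ⟨n, rfl⟩, hy⟩
    exact Set.mem_iUnion.2 ⟨⟨n⟩, hy⟩
  have h1 : #α ≤ Cardinal.sum fun n : ULift.{_} ℕ => #(Set.Iio (f n.down)) := by
    calc #α = #(Set.univ : Set α) := Cardinal.mk_univ.symm
      _ ≤ #(⋃ n : ULift.{_} ℕ, Set.Iio (f n.down)) := Cardinal.mk_le_mk_of_subset hcov
      _ ≤ _ := Cardinal.mk_iUnion_le_sum_mk
  have h2 : Cardinal.sum (fun n : ULift.{_} ℕ => #(Set.Iio (f n.down))) < #α :=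
    Cardinal.sum_lt_of_isRegular hreg (by simpa using hunc) fun n => hinit (f n.down)
  exact absurd h1 h2.not_ge

lemma aux_exists_gt (hunc : ℵ₀ < #α) (hinit : ∀ a : α, #(Set.Iio a) < #α) (a : α) :
    ∃ b, a < b := by
  by_contra h
  push_neg at h
  have hsub : (Set.univ : Set α) ⊆ Set.Iio a ∪ {a} := fun x _ =>
    (lt_or_eq_of_le (h x)).imp id id
  have h1 : #α ≤ #(Set.Iio a) + 1 := by
    calc #α = #(Set.univ : Set α) := Cardinal.mk_univ.symm
      _ ≤ #(Set.Iio a ∪ {a} : Set α) := Cardinal.mk_le_mk_of_subset hsub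
      _ ≤ #(Set.Iio a) + #({a} : Set α) := Cardinal.mk_union_le _ _
      _ = #(Set.Iio a) + 1 := by rw [Cardinal.mk_singleton]
  exact absurd h1 (Cardinal.add_lt_of_lt hunc.le (hinit a)
    (lt_trans Cardinal.one_lt_aleph0 hunc)).not_ge

lemma aux_exists_cof_omega (hreg : (#α).IsRegular) (hunc : ℵ₀ < #α)
    (hinit : ∀ a : α, #(Set.Iio a) < #α) (C : ℕ → Set α) (hC : ∀ n, IsClubIn (C n))
    (a : α) : ∃ k, HasCofOmega k ∧ a < k ∧ ∀ n, k ∈ C n := by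
  classical
  let y : ℕ → α := fun n => Nat.rec (Classical.choose (aux_exists_gt hunc hinit a))
    (fun m prev => Classical.choose ((hC (Nat.unpair m).1).2 prev)) n
  have hy0 : a < y 0 := Classical.choose_spec (aux_exists_gt hunc hinit a)
  have hystep : ∀ m, y (m + 1) ∈ C (Nat.unpair m).1 ∧ y m < y (m + 1) := fun m =>
    Classical.choose_spec ((hC (Nat.unpair m).1).2 (y m))
  have hmono : StrictMono y := strictMono_nat_of_lt_succ fun m => (hystep m).2
  obtain ⟨k, hk⟩ := aux_exists_isLUB ⟨y 0, Set.mem_range_self 0⟩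
    (aux_bddAbove_range hreg hunc hinit y)
  have hyle : ∀ m, y m ≤ k := fun m => hk.1 (Set.mem_range_self m)
  have hylt : ∀ m, y m < k := fun m =>
    lt_of_lt_of_le (hmono (Nat.lt_succ_self m)) (hyle (m + 1))
  have hcofinal : ∀ i, i < k → ∃ m, i < y m := by
    intro i hi
    by_contra hcon
    push_neg at hcon
    exact absurd (hk.2 fun x hx => by obtain ⟨m, rfl⟩ := hx; exact hcon m) (not_le.2 hi)
  refine ⟨k, ⟨⟨y 0, hylt 0⟩, fun m hm => ?_, y, hylt, fun i hi => ?_⟩,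
    hy0.trans (hylt 0), fun n => ?_⟩
  · obtain ⟨p, hp⟩ := hcofinal m hm
    exact ⟨y p, hp, hylt p⟩
  · obtain ⟨p, hp⟩ := hcofinal i hi
    exact ⟨p, hp.le⟩
  · -- k ∈ C n via the subsequence whose unpair-first-coordinate is n
    set t : Set α := (fun m => y (m + 1)) '' {m | (Nat.unpair m).1 = n} with ht
    have htC : t ⊆ C n := by
      rintro x ⟨m, hm, rfl⟩
      have := (hystep m).1
      rwa [hm] at this
    have htne : t.Nonempty := ⟨y (Nat.pair n 0 + 1), ⟨Nat.pair n 0, by simp, rfl⟩⟩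
    have hlub : IsLUB t k := by
      constructor
      · rintro x ⟨m, hm, rfl⟩
        exact hyle (m + 1)
      · intro u hu
        refine hk.2 fun x hx => ?_
        obtain ⟨m, rfl⟩ := hx
        have h1 : y m ≤ y (Nat.pair n m + 1) :=
          hmono.monotone ((Nat.right_le_pair n m).trans (Nat.le_succ _))
        have h2 : y (Nat.pair n m + 1) ∈ t := ⟨Nat.pair n m, by simp, rfl⟩
        exact h1.trans (hu h2)
    exact (hC n).1 t htC htne k hlub

end Aux

/-- Let `κ` be regular uncountable and, for every `k ∈ E^κ_ω`, let `(j k n)_{n<ω}` be a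
sequence cofinal in `k`. Then there is `n* < ω` such that for every `i < κ` the set
`{k ∈ E^κ_ω : j k n* ≥ i}` is stationary. Here `κ` is represented as a well-ordered type `α`
of regular uncountable cardinality all of whose proper initial segments are of size `< #α`. -/
theorem exists_uniform_index {α : Type*} [LinearOrder α] [WellFoundedLT α]
    (hreg : (#α).IsRegular) (hunc : ℵ₀ < #α)
    (hinit : ∀ a : α, #(Set.Iio a) < #α)
    (j : α → ℕ → α)
    (hlt : ∀ k, HasCofOmega k → ∀ n, j k n < k)
    (hcof : ∀ k, HasCofOmega k → ∀ i < k, ∃ n, i ≤ j k n) :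
    ∃ n : ℕ, ∀ i : α, IsStatIn {k : α | HasCofOmega k ∧ i ≤ j k n} := by

  by_contra h
  push_neg at h
  choose i hi using h
  have hC : ∀ n, ∃ c, IsClubIn c ∧ ¬({k : α | HasCofOmega k ∧ i n ≤ j k n} ∩ c).Nonempty := by
    intro n
    by_contra hc
    push_neg at hc
    exact hi n fun c hcl => hc c hcl
  choose C hCc hCe using hC
  obtain ⟨b, hb⟩ := aux_bddAbove_range hreg hunc hinit i
  obtain ⟨k, hk, hbk, hkC⟩ := aux_exists_cof_omega hreg hunc hinit C hCc b
  obtain ⟨n, hn⟩ := hcof k hk b hbk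
  exact hCe n ⟨k, ⟨hk, (hb (Set.mem_range_self n)).trans hn⟩, hkC n⟩
end

section
/- For every regular uncountable cardinal κ there exists a ⊆-decreasing sequence (x_i)_{i<κ} of stationary subsets of κ whose diagonal intersection △_{i<κ} x_i is contained in {0}. -/
open Set Cardinal

/-- The diagonal intersection `△_{i<κ} x i = {k < κ : k ∈ x i for all i < k}`. -/
def diagInter {α : Type*} [LinearOrder α] (x : α → Set α) : Set α :=
  {k : α | ∀ i < k, k ∈ x i}

section Aux

variable {α : Type*} [LinearOrder α] [WellFoundedLT α]

/-- In a well-order, every nonempty bounded-above set has a LUB. -/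
lemma my_exists_isLUB {s : Set α} (hne : s.Nonempty) (hbd : BddAbove s) :
    ∃ a, IsLUB s a := by
  obtain ⟨u, hu⟩ := hbd
  obtain ⟨a, ha, hmin⟩ := (IsWellFounded.wf (r := ((· < ·) : α → α → Prop))).has_min
    (upperBounds s) ⟨u, hu⟩
  exact ⟨a, ha, fun b hb => not_lt.1 (hmin b hb)⟩

variable (hreg : (#α).IsRegular) (hunc : ℵ₀ < #α) (hinit : ∀ a : α, #(Set.Iio a) < #α)

include hreg hunc hinit

lemma my_Iic_small (a : α) : #(Set.Iic a) < #α := by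
  have h1 : (Set.Iic a) = insert a (Set.Iio a) := by
    ext x; simp [le_iff_lt_or_eq, or_comm]
  rw [h1, Cardinal.mk_insert (by simp)]
  rcases lt_or_ge (#(Set.Iio a)) ℵ₀ with h | h
  · calc #(Set.Iio a) + 1 < ℵ₀ := Cardinal.add_lt_aleph0 h Cardinal.one_lt_aleph0
      _ < #α := hunc
  · rw [Cardinal.add_one_eq h]; exact hinit a
  
/-- every countable family is strictly bounded above -/
lemma my_nat_bdd (f : ℕ → α) : ∃ b : α, ∀ n, f n ≤ b := by
  by_contra h
  push_neg at h
  have hcov : (Set.univ : Set α) ⊆ ⋃ n, Set.Iic (f n) := by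
    intro a _
    obtain ⟨n, hn⟩ := h a
    exact Set.mem_iUnion.2 ⟨n, hn.le⟩
  have h1 : #α ≤ Cardinal.sum (fun n : ℕ => #(Set.Iic (f n))) := by
    have := Cardinal.mk_iUnion_le_sum_mk_lift (α := α) (ι := ℕ) (f := fun n => Set.Iic (f n))
    have h2 : #α ≤ #(⋃ n, Set.Iic (f n)) := by
      rw [← Cardinal.mk_univ]
      exact Cardinal.mk_le_mk_of_subset hcov
    calc #α = Cardinal.lift.{0} #α := by simp
      _ ≤ Cardinal.lift.{0} #(⋃ n, Set.Iic (f n)) := Cardinal.lift_le.2 h2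
      _ ≤ _ := this
  have h3 : Cardinal.sum (fun n : ℕ => #(Set.Iic (f n))) < #α := by
    apply Cardinal.sum_lt_lift_of_isRegular hreg
    · simpa using hunc
    · exact fun n => my_Iic_small hreg hunc hinit (f n)
  exact absurd h1 h3.not_ge

lemma my_noMax (a : α) : ∃ b : α, a < b := by
  obtain ⟨b, hb⟩ := my_nat_bdd hreg hunc hinit (fun _ => a)
  by_contra h
  push_neg at h
  have hcov : (Set.univ : Set α) ⊆ Set.Iic a := fun x _ => h x
  have : #α ≤ #(Set.Iic a) := by
    rw [← Cardinal.mk_univ]; exact Cardinal.mk_le_mk_of_subset hcov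
  exact absurd this (my_Iic_small hreg hunc hinit a).not_ge

/-- strict version of bddness -/
lemma my_nat_bdd' (f : ℕ → α) : ∃ b : α, ∀ n, f n < b := by
  obtain ⟨b, hb⟩ := my_nat_bdd hreg hunc hinit f
  obtain ⟨c, hc⟩ := my_noMax hreg hunc hinit b
  exact ⟨c, fun n => (hb n).trans_lt hc⟩

end Aux

section Aux2

variable {α : Type*} [LinearOrder α] [WellFoundedLT α]

/-- the set of "ω-limits" -/
def myE (α : Type*) [LinearOrder α] : Set α :=
  {k | ∃ f : ℕ → α, StrictMono f ∧ IsLUB (Set.range f) k}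

variable (hreg : (#α).IsRegular) (hunc : ℵ₀ < #α) (hinit : ∀ a : α, #(Set.Iio a) < #α)

include hreg hunc hinit

/-- Every club contains ω-limits above any point. -/
lemma my_club_limit {c : Set α} (hc : IsClubIn c) (a : α) :
    ∃ k ∈ c, a < k ∧ k ∈ myE α := by
  have hg : ∀ y : α, ∃ b : α, b ∈ c ∧ y < b := by
    intro y; obtain ⟨b, hb, hlt⟩ := hc.2 y; exact ⟨b, hb, hlt⟩
  choose g hgc hglt using hg
  set f : ℕ → α := fun n => Nat.recAux (g a) (fun _ x => g x) n with hf
  have hf0 : f 0 = g a := rfl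
  have hfs : ∀ n, f (n + 1) = g (f n) := fun n => rfl
  have hmono : StrictMono f := strictMono_nat_of_lt_succ (fun n => by rw [hfs]; exact hglt _)
  have hrange : Set.range f ⊆ c := by rintro _ ⟨n, rfl⟩; cases n with
    | zero => exact hgc a
    | succ m => rw [hfs]; exact hgc _
  obtain ⟨b, hb⟩ := my_nat_bdd hreg hunc hinit f
  obtain ⟨k, hk⟩ := my_exists_isLUB (s := Set.range f) (Set.range_nonempty f)
    ⟨b, by rintro _ ⟨n, rfl⟩; exact hb n⟩
  refine ⟨k, hc.1 _ hrange (Set.range_nonempty f) k hk, ?_, f, hmono, hk⟩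
  calc a < f 0 := hglt a
    _ ≤ k := hk.1 ⟨0, rfl⟩

/-- countable intersections of clubs are clubs -/
lemma my_inter_clubs {c : ℕ → Set α} (hc : ∀ n, IsClubIn (c n)) :
    IsClubIn (⋂ n, c n) := by
  constructor
  · intro s hs hne a ha
    refine Set.mem_iInter.2 fun n => (hc n).1 s (hs.trans (Set.iInter_subset _ n)) hne a ha
  · intro a
    have hg : ∀ (n : ℕ) (y : α), ∃ b : α, b ∈ c n ∧ y < b := by
      intro n y; obtain ⟨b, hb, hlt⟩ := (hc n).2 y; exact ⟨b, hb, hlt⟩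
    choose g hgc hglt using hg
    set f : ℕ → α := fun j => Nat.recAux (g (Nat.unpair 0).1 a)
      (fun j x => g (Nat.unpair (j + 1)).1 x) j with hfdef
    have hfs : ∀ j, f (j + 1) = g (Nat.unpair (j + 1)).1 (f j) := fun j => rfl
    have hmem : ∀ j, f j ∈ c (Nat.unpair j).1 := by
      intro j; cases j with
      | zero => exact hgc _ a
      | succ m => rw [hfs]; exact hgc _ _
    have hmono : StrictMono f := strictMono_nat_of_lt_succ (fun n => by rw [hfs]; exact hglt _ _)
    obtain ⟨b0, hb0⟩ := my_nat_bdd hreg hunc hinit f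
    obtain ⟨k, hk⟩ := my_exists_isLUB (s := Set.range f) (Set.range_nonempty f)
      ⟨b0, by rintro _ ⟨n, rfl⟩; exact hb0 n⟩
    have halt : a < k := by
      calc a < f 0 := hglt _ a
        _ ≤ k := hk.1 ⟨0, rfl⟩
    refine ⟨k, Set.mem_iInter.2 fun n => ?_, halt⟩
    set s : Set α := f '' {j | (Nat.unpair j).1 = n} with hs
    have hssub : s ⊆ c n := by rintro _ ⟨j, hj, rfl⟩; rw [← hj]; exact hmem j
    have hsne : s.Nonempty := ⟨f (Nat.pair n 0), ⟨Nat.pair n 0, by simp [Nat.unpair_pair], rfl⟩⟩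
    refine (hc n).1 s hssub hsne k ⟨fun y hy => hk.1 ?_, fun u hu => hk.2 ?_⟩
    · obtain ⟨j, _, rfl⟩ := hy; exact ⟨j, rfl⟩
    · rintro _ ⟨j, rfl⟩
      have h1 : f j ≤ f (Nat.pair n j) := hmono.monotone (Nat.right_le_pair n j)
      have h2 : f (Nat.pair n j) ∈ s := ⟨Nat.pair n j, by simp [Nat.unpair_pair], rfl⟩
      exact h1.trans (hu h2)

/-- a countable union of sets that is stationary has a stationary member -/
lemma my_union_stat {S : ℕ → Set α} (h : IsStatIn (⋃ n, S n)) :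
    ∃ n, IsStatIn (S n) := by
  by_contra hno
  push_neg at hno
  have hc : ∀ n, ∃ c : Set α, IsClubIn c ∧ S n ∩ c = ∅ := by
    intro n
    have := hno n
    unfold IsStatIn at this
    push_neg at this
    obtain ⟨c, hc1, hc2⟩ := this
    exact ⟨c, hc1, hc2⟩
  choose c hc1 hc2 using hc
  obtain ⟨y, hy1, hy2⟩ := h (⋂ n, c n) (my_inter_clubs hreg hunc hinit hc1)
  obtain ⟨n, hn⟩ := Set.mem_iUnion.1 hy1
  have : y ∈ S n ∩ c n := ⟨hn, Set.mem_iInter.1 hy2 n⟩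
  rw [hc2 n] at this
  exact this

end Aux2

/-- For every regular uncountable cardinal `κ` there is a `⊆`-decreasing sequence
`(x i)_{i<κ}` of stationary sets whose diagonal intersection is contained in `{0}`
(i.e. every member of the diagonal intersection is the least element).
Here `κ` is represented as a well-ordered type `α` of regular uncountable cardinality
all of whose proper initial segments are of size `< #α`. -/
theorem exists_decreasing_stationary_diag_subset_zero {α : Type*} [LinearOrder α]
    [WellFoundedLT α]
    (hreg : (#α).IsRegular) (hunc : ℵ₀ < #α)
    (hinit : ∀ a : α, #(Set.Iio a) < #α) :
    ∃ x : α → Set α, (∀ i, IsStatIn (x i)) ∧ (∀ i j : α, i ≤ j → x j ⊆ x i) ∧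
      diagInter x ⊆ {k : α | ∀ m : α, k ≤ m} := by
  classical
  -- choose a cofinal ω-sequence for each ω-limit
  set seq : α → ℕ → α := fun k => if h : k ∈ myE α then h.choose else fun _ => k with hseq
  have hseq_spec : ∀ k ∈ myE α, StrictMono (seq k) ∧ IsLUB (Set.range (seq k)) k := by
    intro k hk
    simp only [hseq, dif_pos hk]
    exact hk.choose_spec
  have hseq_lt : ∀ k ∈ myE α, ∀ n, seq k n < k := by
    intro k hk n
    obtain ⟨hm, hl⟩ := hseq_spec k hk
    exact (hm (Nat.lt_succ_self n)).trans_le (hl.1 ⟨n + 1, rfl⟩)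
  set T : ℕ → α → Set α := fun n i => {k | k ∈ myE α ∧ i < seq k n} with hT
  have hTanti : ∀ (n : ℕ) (i j : α), i ≤ j → T n j ⊆ T n i := by
    intro n i j hij k hk
    exact ⟨hk.1, hij.trans_lt hk.2⟩
  -- for each i some T n i is stationary
  have hstat : ∀ i : α, ∃ n, IsStatIn (T n i) := by
    intro i
    apply my_union_stat hreg hunc hinit
    intro c hc
    obtain ⟨k, hkc, hik, hkE⟩ := my_club_limit hreg hunc hinit hc i
    obtain ⟨hm, hl⟩ := hseq_spec k hkE
    have hex : ∃ n, i < seq k n := by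
      by_contra hall
      push_neg at hall
      exact absurd (hl.2 (by rintro _ ⟨n, rfl⟩; exact hall n)) hik.not_ge
    obtain ⟨n, hy⟩ := hex
    exact ⟨k, Set.mem_iUnion.2 ⟨n, hkE, hy⟩, hkc⟩
  -- a single n works for all i
  have hone : ∃ n, ∀ i : α, IsStatIn (T n i) := by
    by_contra hno
    push_neg at hno
    choose b hb using hno
    obtain ⟨c, hcb⟩ := my_nat_bdd' hreg hunc hinit b
    obtain ⟨n, hn⟩ := hstat c
    exact hb n ((fun cl hcl => by
      obtain ⟨k, hk1, hk2⟩ := hn cl hcl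
      exact ⟨k, hTanti n (b n) c (hcb n).le hk1, hk2⟩) : IsStatIn (T n (b n)))
  obtain ⟨n, hn⟩ := hone
  refine ⟨T n, hn, fun i j hij => hTanti n i j hij, ?_⟩
  intro k hk m
  by_contra hmk
  have hmk : m < k := not_le.1 hmk
  have h1 : k ∈ T n m := hk m hmk
  have h2 : seq k n < k := hseq_lt k h1.1 n
  have h3 : k ∈ T n (seq k n) := hk _ h2
  exact absurd h3.2 (lt_irrefl _)
end

section
/- If κ is an inaccessible cardinal, then for every family X of fewer than κ stationary subsets of κ there exists a single stationary set y ⊆ κ that stationarily splits every member of X; consequently the stationary reaping number r^cl_κ is at least κ. -/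
open Set Cardinal

/-- `y` stationarily splits `x`: both `x ∩ y` and `x \ y` are stationary. -/
def StatSplits {α : Type*} [LinearOrder α] (y x : Set α) : Prop :=
  IsStatIn (x ∩ y) ∧ IsStatIn (x \ y)

/-- The stationary reaping number `r^cl_κ`: the least cardinality of a family `R` of
stationary sets such that every stationary `x` fails to stationarily split some member
of `R`. -/
noncomputable def statReapingNumber (α : Type*) [LinearOrder α] : Cardinal :=
  sInf { c : Cardinal | ∃ R : Set (Set α), (∀ y ∈ R, IsStatIn y) ∧
    (∀ x : Set α, IsStatIn x → ∃ y ∈ R, ¬ StatSplits x y) ∧ c = #R }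

open Ordinal

universe u

/-- Club subset of the ordinals below `Λ`. -/
def OClub (Λ : Ordinal.{u}) (C : Set Ordinal.{u}) : Prop :=
  C ⊆ Set.Iio Λ ∧ (∀ s ⊆ C, s.Nonempty → sSup s < Λ → sSup s ∈ C) ∧
    ∀ o < Λ, ∃ b ∈ C, o < b

/-- Stationary subset of the ordinals below `Λ`. -/
def OStat (Λ : Ordinal.{u}) (X : Set Ordinal.{u}) : Prop :=
  ∀ C, OClub Λ C → (X ∩ C).Nonempty

theorem OStat.mono {Λ : Ordinal.{u}} {X Y : Set Ordinal} (h : X ⊆ Y) (hX : OStat Λ X) :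
    OStat Λ Y := fun C hC => ((hX C hC).mono (inter_subset_inter_left _ h))

theorem oclub_Iio {Λ : Ordinal.{u}} (h1 : ∀ o < Λ, o + 1 < Λ) : OClub Λ (Set.Iio Λ) :=
  ⟨le_refl _, fun _ _ _ h => h, fun o ho => ⟨o + 1, h1 o ho, lt_add_one o⟩⟩

theorem not_ostat_iff {Λ : Ordinal.{u}} {X : Set Ordinal} :
    ¬ OStat Λ X ↔ ∃ C, OClub Λ C ∧ X ∩ C = ∅ := by
  unfold OStat
  push_neg
  simp [Set.not_nonempty_iff_eq_empty]

section Fixed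
variable {κ : Cardinal.{u}} {Λ : Ordinal.{u}}
variable (hΛ : Λ = κ.ord) (hreg : κ.IsRegular) (hω : ℵ₀ < κ)

include hΛ hreg


theorem isup_lt {ι : Type u} (f : ι → Ordinal.{u}) (hι : #ι < κ) (hf : ∀ i, f i < Λ) :
    (⨆ i, f i) < Λ := by
  subst hΛ
  exact Ordinal.iSup_lt_ord (by rwa [hreg.cof_eq]) hf

include hω in
theorem isup_lt_nat (f : ℕ → Ordinal.{u}) (hf : ∀ i, f i < Λ) : (⨆ i, f i) < Λ := by
  subst hΛ
  refine Ordinal.iSup_lt_ord_lift ?_ hf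
  rw [hreg.cof_eq]
  simpa using hω

theorem card_lt_of_lt {o : Ordinal} (h : o < Λ) : o.card < κ := by
  rwa [hΛ, Cardinal.lt_ord] at h

theorem succ_lt_lam {o : Ordinal} (h : o < Λ) : o + 1 < Λ := by
  subst hΛ
  have := (Cardinal.isSuccLimit_ord hreg.aleph0_le).succ_lt h
  rwa [Ordinal.add_one_eq_succ]

theorem lam_pos : 0 < Λ := hΛ ▸ hreg.ord_pos

theorem oclub_Iio' : OClub Λ (Set.Iio Λ) := oclub_Iio fun _ h => succ_lt_lam hΛ hreg h

theorem not_ostat_empty : ¬ OStat Λ (∅ : Set Ordinal) := by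
  intro h
  rcases h _ (oclub_Iio' hΛ hreg) with ⟨x, hx, -⟩
  exact hx

theorem bsup_lt {o : Ordinal} (ho : o < Λ) (f : ∀ a < o, Ordinal) (hf : ∀ a ha, f a ha < Λ) :
    Ordinal.bsup o f < Λ := by
  subst hΛ
  refine Ordinal.bsup_lt_ord ?_ hf
  rw [hreg.cof_eq]
  exact card_lt_of_lt rfl hreg ho

end Fixed

theorem bddAbove_of_lt {Λ : Ordinal.{u}} {s : Set Ordinal} (h : s ⊆ Set.Iio Λ) : BddAbove s :=
  ⟨Λ, fun _ hx => le_of_lt (h hx)⟩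

theorem bddAbove_range_of_lt {Λ : Ordinal.{u}} {ι : Sort*} {x : ι → Ordinal}
    (hx : ∀ n, x n < Λ) : BddAbove (Set.range x) :=
  ⟨Λ, by rintro _ ⟨n, rfl⟩; exact le_of_lt (hx n)⟩

theorem iSup_tail {Λ : Ordinal.{u}} (x : ℕ → Ordinal) (hx : ∀ n, x n < Λ)
    (hmono : ∀ n, x n ≤ x (n + 1)) (n₀ : ℕ) : (⨆ m, x (n₀ + m)) = ⨆ n, x n := by
  have bdd := bddAbove_range_of_lt hx
  have bdd' : BddAbove (Set.range fun m => x (n₀ + m)) := bddAbove_range_of_lt fun m => hx _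
  have hm : Monotone x := monotone_nat_of_le_succ hmono
  refine le_antisymm (ciSup_le fun m => le_ciSup bdd (n₀ + m)) (ciSup_le fun n => ?_)
  exact le_trans (hm (Nat.le_add_left n n₀)) (le_ciSup bdd' n)

/-- If a sequence `y` inside a club is interleaved with `x`, the limit of `x` is in the club. -/
theorem mem_of_interleaved {Λ : Ordinal.{u}} {C : Set Ordinal} (hC : OClub Λ C)
    {x y : ℕ → Ordinal} (hx : ∀ n, x n < Λ) (hy : ∀ n, y n ∈ C)
    (h2 : ∀ n, x n ≤ y n) (h3 : ∀ n, y n ≤ x (n + 1))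
    (hu : (⨆ n, x n) < Λ) : (⨆ n, x n) ∈ C := by
  have hyΛ : ∀ n, y n < Λ := fun n => lt_of_le_of_lt (h3 n) (hx _)
  have bddx := bddAbove_range_of_lt hx
  have bddy := bddAbove_range_of_lt hyΛ
  have key : sSup (Set.range y) = ⨆ n, x n := by
    refine le_antisymm (csSup_le (Set.range_nonempty _) ?_) (ciSup_le fun n => ?_)
    · rintro _ ⟨n, rfl⟩
      exact le_trans (h3 n) (le_ciSup bddx (n + 1))
    · exact le_trans (h2 n) (le_csSup bddy ⟨n, rfl⟩)
  have := hC.2.1 (Set.range y) (by rintro _ ⟨n, rfl⟩; exact hy n) (Set.range_nonempty _)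
    (by rw [key]; exact hu)
  rwa [key] at this

section Fixed2
variable {κ : Cardinal.{u}} {Λ : Ordinal.{u}}
variable (hΛ : Λ = κ.ord) (hreg : κ.IsRegular) (hω : ℵ₀ < κ)

include hΛ hreg hω

/-- The intersection of fewer than `κ` clubs is club. -/
theorem oclub_iInter {ι : Type u} (hι : #ι < κ) (C : ι → Set Ordinal)
    (h : ∀ i, OClub Λ (C i)) : OClub Λ (Set.Iio Λ ∩ ⋂ i, C i) := by
  classical
  refine ⟨Set.inter_subset_left, ?_, ?_⟩
  · intro s hs hne hlt
    refine ⟨hlt, Set.mem_iInter.2 fun i => ?_⟩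
    exact (h i).2.1 s (fun z hz => Set.mem_iInter.1 (hs hz).2 i) hne hlt
  · intro o ho
    set g : ι → Ordinal → Ordinal := fun i x =>
      if hx : x < Λ then ((h i).2.2 x hx).choose else 0 with hgdef
    have hg : ∀ i x, x < Λ → g i x ∈ C i ∧ x < g i x := by
      intro i x hx
      simp only [hgdef, dif_pos hx]
      obtain ⟨h1, h2⟩ := ((h i).2.2 x hx).choose_spec
      exact ⟨h1, h2⟩
    have hgΛ : ∀ i x, x < Λ → g i x < Λ := fun i x hx => (h i).1 (hg i x hx).1
    set Φ : Ordinal → Ordinal := fun x =>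
      if hx : x < Λ then (⨆ i, g i x) ⊔ (x + 1) else 0 with hΦdef
    have hΦ : ∀ x, x < Λ → (x < Φ x ∧ Φ x < Λ ∧ ∀ i, g i x ≤ Φ x) := by
      intro x hx
      have h1 : (⨆ i, g i x) < Λ := isup_lt hΛ hreg _ hι fun i => hgΛ i x hx
      simp only [hΦdef, dif_pos hx]
      refine ⟨lt_of_lt_of_le (lt_add_one x) le_sup_right,
        sup_lt_iff.2 ⟨h1, succ_lt_lam hΛ hreg hx⟩, fun i => ?_⟩
      exact le_trans (le_ciSup (bddAbove_range_of_lt fun i => hgΛ i x hx) i) le_sup_left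
    set x : ℕ → Ordinal := fun n => Φ^[n] (o + 1) with hxdef
    have hx0 : x 0 = o + 1 := rfl
    have hxs : ∀ n, x (n + 1) = Φ (x n) := by
      intro n
      simp only [hxdef, Function.iterate_succ_apply']
    have hxlt : ∀ n, x n < Λ ∧ x n < x (n + 1) := by
      intro n
      induction n with
      | zero => exact ⟨hx0 ▸ succ_lt_lam hΛ hreg ho, by rw [hxs 0]; exact (hΦ _ (hx0 ▸ succ_lt_lam hΛ hreg ho)).1⟩
      | succ n ih =>
        have h1 : x (n + 1) < Λ := by rw [hxs n]; exact (hΦ _ ih.1).2.1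
        exact ⟨h1, by rw [hxs (n + 1)]; exact (hΦ _ h1).1⟩
    have hu : (⨆ n, x n) < Λ := isup_lt_nat hΛ hreg hω _ fun n => (hxlt n).1
    refine ⟨⨆ n, x n, ⟨hu, Set.mem_iInter.2 fun i => ?_⟩, ?_⟩
    · refine mem_of_interleaved (h i) (fun n => (hxlt n).1) (y := fun n => g i (x n))
        (fun n => (hg i (x n) (hxlt n).1).1) (fun n => le_of_lt (hg i (x n) (hxlt n).1).2)
        (fun n => ?_) hu
      rw [hxs n]
      exact (hΦ _ (hxlt n).1).2.2 i
    · calc o < o + 1 := lt_add_one o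
        _ = x 0 := hx0.symm
        _ ≤ ⨆ n, x n := le_ciSup (bddAbove_range_of_lt fun n => (hxlt n).1) 0

/-- The diagonal intersection of clubs is club. -/
theorem oclub_diag (C : Ordinal → Set Ordinal)
    (h : ∀ β < Λ, OClub Λ (C β)) :
    OClub Λ {o | o < Λ ∧ ∀ β < o, o ∈ C β} := by
  classical
  refine ⟨fun z hz => hz.1, ?_, ?_⟩
  · intro s hs hne hlt
    refine ⟨hlt, fun β hβ => ?_⟩
    have hβΛ : β < Λ := lt_trans hβ hlt
    obtain ⟨z, hzs, hβz⟩ : ∃ z ∈ s, β < z := by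
      by_contra hcon
      push_neg at hcon
      exact absurd (csSup_le hne hcon) (not_le.2 hβ)
    have hbdd : BddAbove s := bddAbove_of_lt (fun w hw => (hs hw).1)
    have hsub : s ∩ Set.Ioi β ⊆ C β := fun w hw => (hs hw.1).2 β hw.2
    have hkey : sSup (s ∩ Set.Ioi β) = sSup s := by
      refine le_antisymm (csSup_le ⟨z, hzs, hβz⟩ fun w hw => le_csSup hbdd hw.1)
        (csSup_le hne fun w hw => ?_)
      rcases le_or_gt w β with h1 | h1
      · exact le_trans (le_trans h1 (le_of_lt hβz)) (le_csSup (hbdd.mono Set.inter_subset_left) ⟨hzs, hβz⟩)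
      · exact le_csSup (hbdd.mono Set.inter_subset_left) ⟨hw, h1⟩
    have := (h β hβΛ).2.1 (s ∩ Set.Ioi β) hsub ⟨z, hzs, hβz⟩ (hkey ▸ hlt)
    rwa [hkey] at this
  · intro o ho
    set g : Ordinal → Ordinal → Ordinal := fun β x =>
      if hx : β < Λ ∧ x < Λ then ((h β hx.1).2.2 x hx.2).choose else 0 with hgdef
    have hg : ∀ β x, β < Λ → x < Λ → g β x ∈ C β ∧ x < g β x := by
      intro β x hβ hx
      simp only [hgdef, dif_pos (And.intro hβ hx)]
      obtain ⟨h1, h2⟩ := ((h β hβ).2.2 x hx).choose_spec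
      exact ⟨h1, h2⟩
    have hgΛ : ∀ β x, β < Λ → x < Λ → g β x < Λ := fun β x hβ hx => (h β hβ).1 (hg β x hβ hx).1
    set Φ : Ordinal → Ordinal := fun x =>
      if hx : x < Λ then (Ordinal.bsup (x + 1) fun β _ => g β x) ⊔ (x + 1) else 0 with hΦdef
    have hΦ : ∀ x, x < Λ → (x < Φ x ∧ Φ x < Λ ∧ ∀ β ≤ x, g β x ≤ Φ x) := by
      intro x hx
      have hx1 : x + 1 < Λ := succ_lt_lam hΛ hreg hx
      have h1 : (Ordinal.bsup (x + 1) fun β _ => g β x) < Λ :=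
        bsup_lt hΛ hreg hx1 _ fun β hβ => hgΛ β x (lt_trans hβ hx1) hx
      simp only [hΦdef, dif_pos hx]
      refine ⟨lt_of_lt_of_le (lt_add_one x) le_sup_right,
        sup_lt_iff.2 ⟨h1, hx1⟩, fun β hβ => ?_⟩
      exact le_trans (Ordinal.le_bsup _ β (lt_of_le_of_lt hβ (lt_add_one x))) le_sup_left
    set x : ℕ → Ordinal := fun n => Φ^[n] (o + 1) with hxdef
    have hx0 : x 0 = o + 1 := rfl
    have hxs : ∀ n, x (n + 1) = Φ (x n) := by
      intro n
      simp only [hxdef, Function.iterate_succ_apply']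
    have hxlt : ∀ n, x n < Λ ∧ x n < x (n + 1) := by
      intro n
      induction n with
      | zero => exact ⟨hx0 ▸ succ_lt_lam hΛ hreg ho, by rw [hxs 0]; exact (hΦ _ (hx0 ▸ succ_lt_lam hΛ hreg ho)).1⟩
      | succ n ih =>
        have h1 : x (n + 1) < Λ := by rw [hxs n]; exact (hΦ _ ih.1).2.1
        exact ⟨h1, by rw [hxs (n + 1)]; exact (hΦ _ h1).1⟩
    have hmono : ∀ n, x n ≤ x (n + 1) := fun n => le_of_lt (hxlt n).2
    have hmono' : Monotone x := monotone_nat_of_le_succ hmono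
    have hu : (⨆ n, x n) < Λ := isup_lt_nat hΛ hreg hω _ fun n => (hxlt n).1
    have hbddx := bddAbove_range_of_lt (Λ := Λ) fun n => (hxlt n).1
    refine ⟨⨆ n, x n, ⟨hu, fun β hβ => ?_⟩, ?_⟩
    · obtain ⟨n, hn⟩ : ∃ n, β < x n := by
        by_contra hcon
        push_neg at hcon
        exact absurd (ciSup_le hcon) (not_le.2 hβ)
      have hβΛ : β < Λ := lt_trans hn (hxlt n).1
      have htail : (⨆ m, x (n + m)) = ⨆ n, x n :=
        iSup_tail (Λ := Λ) x (fun k => (hxlt k).1) hmono n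
      rw [← htail]
      refine mem_of_interleaved (h β hβΛ) (fun m => (hxlt (n + m)).1)
        (y := fun m => g β (x (n + m)))
        (fun m => (hg β (x (n + m)) hβΛ (hxlt (n + m)).1).1)
        (fun m => le_of_lt (hg β (x (n + m)) hβΛ (hxlt (n + m)).1).2)
        (fun m => ?_) (htail ▸ hu)
      have : x (n + m) + 0 = x (n + m) := by simp
      show g β (x (n + m)) ≤ x (n + (m + 1))
      have heq : x (n + (m + 1)) = Φ (x (n + m)) := by
        rw [show n + (m + 1) = (n + m) + 1 by ring, hxs]
      rw [heq]
      exact (hΦ _ (hxlt (n + m)).1).2.2 β (le_of_lt (lt_of_lt_of_le hn (hmono' (Nat.le_add_right n m))))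
    · calc o < o + 1 := lt_add_one o
        _ = x 0 := hx0.symm
        _ ≤ ⨆ n, x n := le_ciSup hbddx 0

end Fixed2

section Fixed3
variable {κ : Cardinal.{u}} {Λ : Ordinal.{u}}
variable (hΛ : Λ = κ.ord) (hreg : κ.IsRegular) (hω : ℵ₀ < κ)

include hΛ hreg hω

theorem oclub_inter {C D : Set Ordinal} (hC : OClub Λ C) (hD : OClub Λ D) :
    OClub Λ (C ∩ D) := by
  have hcard : #(ULift.{u} Bool) < κ := by
    rw [Cardinal.mk_fintype]
    simp only [Fintype.card_ulift, Fintype.card_bool]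
    exact_mod_cast hreg.nat_lt 2
  have h := oclub_iInter hΛ hreg hω hcard (fun b => if b.down then C else D)
    (fun b => by by_cases h : b.down <;> simp [h, hC, hD])
  have heq : (Set.Iio Λ ∩ ⋂ b : ULift.{u} Bool, if b.down then C else D) = C ∩ D := by
    ext z
    constructor
    · rintro ⟨-, hz⟩
      exact ⟨by simpa using Set.mem_iInter.1 hz ⟨true⟩, by simpa using Set.mem_iInter.1 hz ⟨false⟩⟩
    · rintro ⟨h1, h2⟩
      exact ⟨hC.1 h1, Set.mem_iInter.2 fun b => by by_cases h : b.down <;> simp [h, h1, h2]⟩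
  rwa [heq] at h

theorem ostat_inter_oclub {X C : Set Ordinal} (hX : OStat Λ X) (hC : OClub Λ C) :
    OStat Λ (X ∩ C) := by
  intro C' hC'
  obtain ⟨z, hz1, hz2, hz3⟩ := hX (C ∩ C') (oclub_inter hΛ hreg hω hC hC')
  exact ⟨z, ⟨hz1, hz2⟩, hz3⟩

theorem oclub_Ioo {a : Ordinal} (ha : a < Λ) : OClub Λ (Set.Ioo a Λ) := by
  refine ⟨fun z hz => hz.2, ?_, ?_⟩
  · intro s hs hne hlt
    obtain ⟨z, hz⟩ := hne
    exact ⟨lt_of_lt_of_le (hs hz).1 (le_csSup (bddAbove_of_lt (fun w hw => (hs hw).2)) hz), hlt⟩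
  · intro o ho
    refine ⟨(o ⊔ a) + 1, ⟨?_, ?_⟩, ?_⟩
    · exact lt_of_le_of_lt le_sup_right (lt_add_one _)
    · exact succ_lt_lam hΛ hreg (sup_lt_iff.2 ⟨ho, ha⟩)
    · exact lt_of_le_of_lt le_sup_left (lt_add_one _)

/-- Fodor's pressing-down lemma. -/
theorem fodor {S : Set Ordinal} (hS : OStat Λ S) (f : Ordinal → Ordinal)
    (hf : ∀ δ ∈ S, f δ < δ) : ∃ a, a < Λ ∧ OStat Λ {δ ∈ S | f δ = a} := by
  classical
  by_contra hcon
  push_neg at hcon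
  set Cl : Ordinal → Set Ordinal := fun a =>
    if h : a < Λ ∧ ¬ OStat Λ {δ ∈ S | f δ = a} then (not_ostat_iff.1 h.2).choose
    else Set.Iio Λ with hCldef
  have hCl : ∀ a < Λ, OClub Λ (Cl a) ∧ {δ ∈ S | f δ = a} ∩ Cl a = ∅ := by
    intro a ha
    have hna := hcon a ha
    simp only [hCldef, dif_pos (And.intro ha hna)]
    exact (not_ostat_iff.1 hna).choose_spec
  obtain ⟨δ, hδS, hδΛ, hδD⟩ := hS _ (oclub_diag hΛ hreg hω Cl fun β hβ => (hCl β hβ).1)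
  have hfδ : f δ < δ := hf δ hδS
  have : δ ∈ {x ∈ S | f x = f δ} ∩ Cl (f δ) := ⟨⟨hδS, rfl⟩, hδD (f δ) hfδ⟩
  rw [(hCl (f δ) (lt_trans hfδ hδΛ)).2] at this
  exact this

theorem ostat_of_cover {ι : Type u} (hι : #ι < κ) {X : Set Ordinal} (hX : OStat Λ X)
    (A : ι → Set Ordinal) (hcov : X ⊆ ⋃ i, A i) : ∃ i, OStat Λ (X ∩ A i) := by
  classical
  by_contra hcon
  push_neg at hcon
  set Cl : ι → Set Ordinal := fun i => (not_ostat_iff.1 (hcon i)).choose with hCldef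
  have hCl : ∀ i, OClub Λ (Cl i) ∧ (X ∩ A i) ∩ Cl i = ∅ := fun i =>
    (not_ostat_iff.1 (hcon i)).choose_spec
  obtain ⟨δ, hδX, hδΛ, hδI⟩ := hX _ (oclub_iInter hΛ hreg hω hι Cl fun i => (hCl i).1)
  obtain ⟨i, hi⟩ := Set.mem_iUnion.1 (hcov hδX)
  have : δ ∈ (X ∩ A i) ∩ Cl i := ⟨⟨hδX, hi⟩, Set.mem_iInter.1 hδI i⟩
  rw [(hCl i).2] at this
  exact this

end Fixed3

/-- Limit points of `C` below `Λ` (which are themselves in `C`, for `C` closed). -/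
def limOp (Λ : Ordinal.{u}) (C : Set Ordinal.{u}) : Set Ordinal :=
  {u | u < Λ ∧ u ∈ C ∧ ∀ β < u, ∃ c ∈ C, β < c ∧ c < u}

section Fixed4
variable {κ : Cardinal.{u}} {Λ : Ordinal.{u}}
variable (hΛ : Λ = κ.ord) (hreg : κ.IsRegular) (hω : ℵ₀ < κ)

include hΛ hreg hω

theorem oclub_limOp {C : Set Ordinal} (hC : OClub Λ C) : OClub Λ (limOp Λ C) := by
  classical
  refine ⟨fun z hz => hz.1, ?_, ?_⟩
  · intro s hs hne hlt
    refine ⟨hlt, hC.2.1 s (fun z hz => (hs hz).2.1) hne hlt, fun β hβ => ?_⟩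
    obtain ⟨z, hzs, hβz⟩ : ∃ z ∈ s, β < z := by
      by_contra hcon
      push_neg at hcon
      exact absurd (csSup_le hne hcon) (not_le.2 hβ)
    rcases eq_or_lt_of_le (le_csSup (bddAbove_of_lt fun w hw => (hs hw).1) hzs) with h1 | h1
    · obtain ⟨c, hc1, hc2, hc3⟩ := (hs hzs).2.2 β (h1 ▸ hβz)
      exact ⟨c, hc1, hc2, h1 ▸ hc3⟩
    · exact ⟨z, (hs hzs).2.1, hβz, h1⟩
  · intro o ho
    set g : Ordinal → Ordinal := fun x => if hx : x < Λ then (hC.2.2 x hx).choose else 0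
      with hgdef
    have hg : ∀ x, x < Λ → g x ∈ C ∧ x < g x := by
      intro x hx
      simp only [hgdef, dif_pos hx]
      obtain ⟨h1, h2⟩ := (hC.2.2 x hx).choose_spec
      exact ⟨h1, h2⟩
    have hgΛ : ∀ x, x < Λ → g x < Λ := fun x hx => hC.1 (hg x hx).1
    set x : ℕ → Ordinal := fun n => g^[n + 1] o with hxdef
    have hx0 : x 0 = g o := rfl
    have hxs : ∀ n, x (n + 1) = g (x n) := by
      intro n
      simp only [hxdef, Function.iterate_succ_apply']
    have hxlt : ∀ n, x n < Λ ∧ x n < x (n + 1) ∧ x n ∈ C := by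
      intro n
      induction n with
      | zero =>
        have h1 : x 0 < Λ := hx0 ▸ hgΛ o ho
        exact ⟨h1, by rw [hxs 0]; exact (hg _ h1).2, hx0 ▸ (hg o ho).1⟩
      | succ n ih =>
        have h1 : x (n + 1) < Λ := by rw [hxs n]; exact hgΛ _ ih.1
        exact ⟨h1, by rw [hxs (n + 1)]; exact (hg _ h1).2, by rw [hxs n]; exact (hg _ ih.1).1⟩
    have hu : (⨆ n, x n) < Λ := isup_lt_nat hΛ hreg hω _ fun n => (hxlt n).1
    have hbddx := bddAbove_range_of_lt (Λ := Λ) fun n => (hxlt n).1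
    have huC : (⨆ n, x n) ∈ C := by
      have : sSup (Set.range x) ∈ C :=
        hC.2.1 _ (by rintro _ ⟨n, rfl⟩; exact (hxlt n).2.2) (Set.range_nonempty _) hu
      exact this
    refine ⟨⨆ n, x n, ⟨hu, huC, fun β hβ => ?_⟩, ?_⟩
    · obtain ⟨n, hn⟩ : ∃ n, β < x n := by
        by_contra hcon
        push_neg at hcon
        exact absurd (ciSup_le hcon) (not_le.2 hβ)
      exact ⟨x n, (hxlt n).2.2, hn, lt_of_lt_of_le (hxlt n).2.1 (le_ciSup hbddx (n + 1))⟩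
    · have : o < x 0 := hx0 ▸ (hg o ho).2
      exact lt_of_lt_of_le this (le_ciSup hbddx 0)

theorem omega_lt_lam : (Ordinal.omega0 : Ordinal) < Λ := by
  rw [hΛ, ← Cardinal.ord_aleph0]
  exact Cardinal.ord_lt_ord.2 hω

/-- The club of limit ordinals above ω. -/
theorem oclub_limits : OClub Λ {o | o < Λ ∧ Ordinal.omega0 < o ∧ Order.IsSuccLimit o} := by
  refine ⟨fun z hz => hz.1, ?_, ?_⟩
  · intro s hs hne hlt
    obtain ⟨z, hz⟩ := hne
    have hbdd : BddAbove s := bddAbove_of_lt fun w hw => (hs hw).1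
    have hωu : Ordinal.omega0 < sSup s := lt_of_lt_of_le (hs hz).2.1 (le_csSup hbdd hz)
    refine ⟨hlt, hωu, ?_⟩
    by_cases hmem : sSup s ∈ s
    · exact (hs hmem).2.2
    · refine Ordinal.isSuccLimit_iff.2 ⟨fun h0 => by simp [h0] at hωu, Order.isSuccPrelimit_of_succ_lt fun a ha => ?_⟩
      obtain ⟨w, hws, haw⟩ : ∃ w ∈ s, a < w := by
        by_contra hcon
        push_neg at hcon
        exact absurd (csSup_le ⟨z, hz⟩ hcon) (not_le.2 ha)
      have hwu : w < sSup s := lt_of_le_of_ne (le_csSup hbdd hws) (fun h => hmem (h ▸ hws))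
      exact lt_of_le_of_lt (Order.succ_le_of_lt haw) hwu
  · intro o ho
    refine ⟨(o ⊔ Ordinal.omega0) + Ordinal.omega0, ⟨?_, ?_, ?_⟩, ?_⟩
    · rw [hΛ, Cardinal.lt_ord, Ordinal.card_add]
      refine Cardinal.add_lt_of_lt hreg.aleph0_le ?_ ?_
      · exact card_lt_of_lt hΛ hreg (sup_lt_iff.2 ⟨ho, omega_lt_lam hΛ hreg hω⟩)
      · simpa using hω
    · refine lt_of_le_of_lt (le_sup_right : Ordinal.omega0 ≤ o ⊔ Ordinal.omega0) ?_
      simpa using (add_lt_add_iff_left (o ⊔ Ordinal.omega0)).2 Ordinal.omega0_pos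
    · exact Ordinal.isSuccLimit_add _ Ordinal.isSuccLimit_omega0
    · refine lt_of_le_of_lt (le_sup_left : o ≤ o ⊔ Ordinal.omega0) ?_
      simpa using (add_lt_add_iff_left (o ⊔ Ordinal.omega0)).2 Ordinal.omega0_pos

end Fixed4

section Fixed5
variable {κ : Cardinal.{u}} {Λ : Ordinal.{u}}
variable (hΛ : Λ = κ.ord) (hreg : κ.IsRegular) (hω : ℵ₀ < κ)

include hΛ hreg hω

theorem oclub_closure (F : Ordinal → Ordinal) (hF : ∀ o < Λ, F o < Λ) :
    OClub Λ {o | o < Λ ∧ ∀ ξ < o, F ξ < o} := by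
  have h := oclub_diag hΛ hreg hω (fun ξ => Set.Ioo (F ξ) Λ)
    (fun ξ hξ => oclub_Ioo hΛ hreg hω (hF ξ hξ))
  have heq : {o | o < Λ ∧ ∀ β < o, o ∈ Set.Ioo (F β) Λ} = {o | o < Λ ∧ ∀ ξ < o, F ξ < o} := by
    ext z
    exact ⟨fun ⟨h1, h2⟩ => ⟨h1, fun ξ hξ => (h2 ξ hξ).1⟩,
      fun ⟨h1, h2⟩ => ⟨h1, fun ξ hξ => ⟨h2 ξ hξ, h1⟩⟩⟩
  rwa [heq] at h

theorem aleph0_lt_cof_of_reg {δ : Ordinal} (hδω : Ordinal.omega0 < δ)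
    (hδreg : (δ.cof).ord = δ) : ℵ₀ < δ.cof := by
  by_contra hcon
  push_neg at hcon
  have : δ.cof.ord ≤ (ℵ₀ : Cardinal).ord := Cardinal.ord_le_ord.2 hcon
  rw [hδreg, Cardinal.ord_aleph0] at this
  exact absurd (lt_of_lt_of_le hδω this) (lt_irrefl _)

/-- The set of non-reflection points of a stationary set of "regular" ordinals
is stationary. -/
theorem trace_stationary {S : Set Ordinal} (hS : OStat Λ S)
    (hSreg : ∀ δ ∈ S, Ordinal.omega0 < δ ∧ (δ.cof).ord = δ) :
    OStat Λ {δ ∈ S | ∃ e, OClub δ e ∧ e ∩ S = ∅} := by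
  classical
  intro C hC
  set D : Set Ordinal := limOp Λ C with hDdef
  have hD : OClub Λ D := oclub_limOp hΛ hreg hω hC
  set D₂ : Set Ordinal := limOp Λ D with hD₂def
  have hD₂ : OClub Λ D₂ := oclub_limOp hΛ hreg hω hD
  have hne : (S ∩ D₂).Nonempty := hS _ hD₂
  set δ₀ : Ordinal := sInf (S ∩ D₂) with hδ₀def
  have hδ₀mem : δ₀ ∈ S ∩ D₂ := csInf_mem hne
  have hδ₀min : ∀ z ∈ S ∩ D₂, δ₀ ≤ z := fun z hz => csInf_le' hz
  have hδ₀Λ : δ₀ < Λ := hδ₀mem.2.1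
  have hδ₀ω : Ordinal.omega0 < δ₀ := (hSreg δ₀ hδ₀mem.1).1
  have hδ₀cof : ℵ₀ < δ₀.cof := aleph0_lt_cof_of_reg hΛ hreg hω hδ₀ω (hSreg δ₀ hδ₀mem.1).2
  -- the club `e ⊆ Iio δ₀` witnessing non-reflection
  have hclub : OClub δ₀ (D₂ ∩ Set.Iio δ₀) := by
    refine ⟨Set.inter_subset_right, ?_, ?_⟩
    · intro s hs hne' hlt
      refine ⟨hD₂.2.1 s (fun z hz => (hs hz).1) hne' (lt_trans hlt hδ₀Λ), hlt⟩
    · -- unboundedness: use that δ₀ is a limit of limit points of D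
      intro o ho
      set g : Ordinal → Ordinal := fun x => if hx : x < δ₀ then (hδ₀mem.2.2.2 x hx).choose else 0
        with hgdef
      have hg : ∀ x, x < δ₀ → g x ∈ D ∧ x < g x ∧ g x < δ₀ := by
        intro x hx
        simp only [hgdef, dif_pos hx]
        obtain ⟨h1, h2, h3⟩ := (hδ₀mem.2.2.2 x hx).choose_spec
        exact ⟨h1, h2, h3⟩
      set x : ℕ → Ordinal := fun n => g^[n + 1] o with hxdef
      have hx0 : x 0 = g o := rfl
      have hxs : ∀ n, x (n + 1) = g (x n) := fun n => by
        simp only [hxdef, Function.iterate_succ_apply']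
      have hxlt : ∀ n, x n < δ₀ ∧ x n < x (n + 1) ∧ x n ∈ D := by
        intro n
        induction n with
        | zero =>
          have h1 : x 0 < δ₀ := hx0 ▸ (hg o ho).2.2
          exact ⟨h1, by rw [hxs 0]; exact (hg _ h1).2.1, hx0 ▸ (hg o ho).1⟩
        | succ n ih =>
          have h1 : x (n + 1) < δ₀ := by rw [hxs n]; exact (hg _ ih.1).2.2
          exact ⟨h1, by rw [hxs (n + 1)]; exact (hg _ h1).2.1, by rw [hxs n]; exact (hg _ ih.1).1⟩
      have hu : (⨆ n, x n) < δ₀ := by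
        refine Ordinal.iSup_lt_ord_lift ?_ fun n => (hxlt n).1
        simpa using hδ₀cof
      have hbddx := bddAbove_range_of_lt (Λ := δ₀) fun n => (hxlt n).1
      have huD : (⨆ n, x n) ∈ D := by
        refine hD.2.1 (Set.range x) (by rintro _ ⟨n, rfl⟩; exact (hxlt n).2.2)
          (Set.range_nonempty _) ?_
        exact lt_trans hu hδ₀Λ
      refine ⟨⨆ n, x n, ⟨⟨lt_trans hu hδ₀Λ, huD, fun β hβ => ?_⟩, hu⟩, ?_⟩
      · obtain ⟨n, hn⟩ : ∃ n, β < x n := by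
          by_contra hcon
          push_neg at hcon
          exact absurd (ciSup_le hcon) (not_le.2 hβ)
        exact ⟨x n, (hxlt n).2.2, hn, lt_of_lt_of_le (hxlt n).2.1 (le_ciSup hbddx (n + 1))⟩
      · exact lt_of_lt_of_le (hx0 ▸ (hg o ho).2.1) (le_ciSup hbddx 0)
  refine ⟨δ₀, ⟨hδ₀mem.1, ⟨D₂ ∩ Set.Iio δ₀, hclub, ?_⟩⟩, ?_⟩
  · ext z
    simp only [Set.mem_inter_iff, Set.mem_Iio, Set.mem_empty_iff_false, iff_false, not_and]
    rintro ⟨hz1, hz2⟩ hzS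
    exact absurd (hδ₀min z ⟨hzS, hz1⟩) (not_le.2 hz2)
  · exact hδ₀mem.2.2.1.2.1
end Fixed5

section Fixed6
variable {κ : Cardinal.{u}} {Λ : Ordinal.{u}}
variable (hΛ : Λ = κ.ord) (hreg : κ.IsRegular) (hω : ℵ₀ < κ)

include hΛ hreg hω

theorem case_regular {S : Set Ordinal} (hS : OStat Λ S) (hsub : S ⊆ Set.Iio Λ)
    (hSreg : ∀ δ ∈ S, Ordinal.omega0 < δ ∧ (δ.cof).ord = δ) :
    ∃ S', S' ⊆ S ∧ ∃ f : Ordinal → Ordinal, OStat Λ S' ∧ (∀ δ ∈ S', f δ < δ) ∧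
      ∀ η < Λ, OStat Λ {δ ∈ S' | η < f δ} := by
  classical
  set T : Set Ordinal := {δ ∈ S | ∃ e, OClub δ e ∧ e ∩ S = ∅} with hTdef
  have hT : OStat Λ T := trace_stationary hΛ hreg hω hS hSreg
  set E : Ordinal → Set Ordinal := fun δ =>
    if h : ∃ e, OClub δ e ∧ e ∩ S = ∅ then h.choose else ∅ with hEdef
  have hE : ∀ δ ∈ T, OClub δ (E δ) ∧ E δ ∩ S = ∅ := by
    intro δ hδ
    simp only [hEdef, dif_pos hδ.2]
    exact hδ.2.choose_spec
  set hfun : Ordinal → Ordinal → Ordinal := fun δ ξ => sInf (E δ ∩ Set.Ioi ξ) with hfdef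
  have hh : ∀ δ ∈ T, ∀ ξ < δ, hfun δ ξ ∈ E δ ∧ ξ < hfun δ ξ ∧ hfun δ ξ < δ := by
    intro δ hδ ξ hξ
    obtain ⟨b, hb1, hb2⟩ := (hE δ hδ).1.2.2 ξ hξ
    have hmem : hfun δ ξ ∈ E δ ∩ Set.Ioi ξ := csInf_mem ⟨b, hb1, hb2⟩
    exact ⟨hmem.1, hmem.2, (hE δ hδ).1.1 hmem.1⟩
  have claim : ∃ ξ, ξ < Λ ∧ ∀ η < Λ, OStat Λ {δ ∈ T | ξ < δ ∧ η < hfun δ ξ} := by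
    by_contra hcon
    push_neg at hcon
    -- for each ξ < Λ get a bound η ξ and a club avoiding the tail set
    have hch : ∀ ξ, ξ < Λ → ∃ η, η < Λ ∧ ∃ Cl, OClub Λ Cl ∧
        {δ ∈ T | ξ < δ ∧ η < hfun δ ξ} ∩ Cl = ∅ := by
      intro ξ hξ
      obtain ⟨η, hη, hns⟩ := hcon ξ hξ
      obtain ⟨Cl, h1, h2⟩ := not_ostat_iff.1 hns
      exact ⟨η, hη, Cl, h1, h2⟩
    set η : Ordinal → Ordinal := fun ξ => if h : ξ < Λ then (hch ξ h).choose else 0 with hηdef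
    set Cl : Ordinal → Set Ordinal := fun ξ =>
      if h : ξ < Λ then (hch ξ h).choose_spec.2.choose else Set.Iio Λ with hCldef
    have hη : ∀ ξ < Λ, η ξ < Λ := by
      intro ξ hξ
      simp only [hηdef, dif_pos hξ]
      exact (hch ξ hξ).choose_spec.1
    have hCl : ∀ ξ < Λ, OClub Λ (Cl ξ) ∧ {δ ∈ T | ξ < δ ∧ η ξ < hfun δ ξ} ∩ Cl ξ = ∅ := by
      intro ξ hξ
      simp only [hηdef, hCldef, dif_pos hξ]
      exact ⟨(hch ξ hξ).choose_spec.2.choose_spec.1, (hch ξ hξ).choose_spec.2.choose_spec.2⟩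
    set Ecl : Set Ordinal := {o | o < Λ ∧ ∀ ξ < o, η ξ < o} with hEcldef
    have hEcl : OClub Λ Ecl := oclub_closure hΛ hreg hω η hη
    set Dg : Set Ordinal := {o | o < Λ ∧ ∀ β < o, o ∈ Cl β} with hDgdef
    have hDg : OClub Λ Dg := oclub_diag hΛ hreg hω Cl fun β hβ => (hCl β hβ).1
    obtain ⟨δ, hδT, hδ1⟩ := hT _ (oclub_inter hΛ hreg hω hDg hEcl)
    obtain ⟨δ', hδ'T, hδ'1⟩ := hT _ (oclub_inter hΛ hreg hω (oclub_inter hΛ hreg hω hDg hEcl)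
      (oclub_Ioo hΛ hreg hω (hδ1.1.1 : δ < Λ)))
    have hδδ' : δ < δ' := hδ'1.2.1
    have hδω : Ordinal.omega0 < δ := (hSreg δ hδT.1).1
    have hδ0 : (0 : Ordinal) < δ := lt_trans Ordinal.omega0_pos hδω
    -- the coordinates of δ' below δ are bounded by η and live in E δ'
    set s₀ : Set Ordinal := (fun ξ => hfun δ' ξ) '' Set.Iio δ with hs₀def
    have hs₀sub : s₀ ⊆ E δ' := by
      rintro _ ⟨ξ, hξ, rfl⟩
      exact (hh δ' hδ'T ξ (lt_trans hξ hδδ')).1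
    have hs₀ne : s₀.Nonempty := ⟨hfun δ' 0, 0, hδ0, rfl⟩
    have hbound : ∀ ξ < δ, hfun δ' ξ ≤ η ξ := by
      intro ξ hξ
      have hξΛ : ξ < Λ := lt_trans hξ hδ1.1.1
      by_contra hcon2
      push_neg at hcon2
      have : δ' ∈ {x ∈ T | ξ < x ∧ η ξ < hfun x ξ} ∩ Cl ξ :=
        ⟨⟨hδ'T, lt_trans hξ hδδ', hcon2⟩, hδ'1.1.1.2 ξ (lt_trans hξ hδδ')⟩
      rw [(hCl ξ hξΛ).2] at this
      exact this
    have hsup_le : sSup s₀ ≤ δ := by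
      refine csSup_le hs₀ne ?_
      rintro _ ⟨ξ, hξ, rfl⟩
      exact le_of_lt (lt_of_le_of_lt (hbound ξ hξ) (hδ1.2.2 ξ hξ))
    have hsup : sSup s₀ = δ := by
      refine le_antisymm hsup_le ?_
      by_contra hcon2
      push_neg at hcon2
      have h1 : hfun δ' (sSup s₀) ∈ s₀ := ⟨sSup s₀, hcon2, rfl⟩
      have h2 : sSup s₀ < hfun δ' (sSup s₀) := (hh δ' hδ'T _ (lt_trans hcon2 hδδ')).2.1
      exact absurd (le_csSup (bddAbove_of_lt (fun w hw => (hE δ' hδ'T).1.1 (hs₀sub hw))) h1)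
        (not_le.2 h2)
    have hδE : δ ∈ E δ' := by
      have := (hE δ' hδ'T).1.2.1 s₀ hs₀sub hs₀ne (hsup ▸ hδδ')
      rwa [hsup] at this
    have : δ ∈ E δ' ∩ S := ⟨hδE, hδT.1⟩
    rw [(hE δ' hδ'T).2] at this
    exact this
  obtain ⟨ξ₀, hξ₀Λ, hclaim⟩ := claim
  refine ⟨{δ ∈ T | ξ₀ < δ}, fun z hz => hz.1.1, fun δ => hfun δ ξ₀, ?_, ?_, ?_⟩
  · refine OStat.mono ?_ (hclaim ξ₀ hξ₀Λ)
    rintro z ⟨hz1, hz2, -⟩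
    exact ⟨hz1, hz2⟩
  · rintro δ ⟨hδT, hδξ⟩
    exact (hh δ hδT ξ₀ hδξ).2.2
  · intro η hη
    refine OStat.mono ?_ (hclaim η hη)
    rintro z ⟨hz1, hz2, hz3⟩
    exact ⟨⟨hz1, hz2⟩, hz3⟩

end Fixed6

section Fixed7
variable {κ : Cardinal.{u}} {Λ : Ordinal.{u}}
variable (hΛ : Λ = κ.ord) (hreg : κ.IsRegular) (hω : ℵ₀ < κ)

include hΛ hreg hω

theorem case_singular {S : Set Ordinal} (hS : OStat Λ S) (hsub : S ⊆ Set.Iio Λ)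
    (hlim : ∀ δ ∈ S, (δ.cof).ord < δ) :
    ∃ S', S' ⊆ S ∧ ∃ f : Ordinal → Ordinal, OStat Λ S' ∧ (∀ δ ∈ S', f δ < δ) ∧
      ∀ η < Λ, OStat Λ {δ ∈ S' | η < f δ} := by
  classical
  obtain ⟨lamo, hlamoΛ, hP⟩ := fodor hΛ hreg hω hS (fun δ => (δ.cof).ord) hlim
  set P : Set Ordinal := {δ ∈ S | (δ.cof).ord = lamo} with hPdef
  set lamc : Cardinal := lamo.card with hlamcdef
  have hlamc : lamc < κ := card_lt_of_lt hΛ hreg hlamoΛ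
  have hcofP : ∀ δ ∈ P, δ.cof = lamc := by
    intro δ hδ
    rw [hlamcdef, ← hδ.2, Cardinal.card_ord]
  set I : Type u := lamo.ToType with hIdef
  have hI : #I = lamc := by rw [hIdef, Cardinal.mk_toType]
  set prp : Ordinal → Prop := fun δ =>
    ∃ F : I → Ordinal, (∀ i, F i < δ) ∧ ∀ β < δ, ∃ i, β ≤ F i with hprpdef
  have hprp : ∀ δ ∈ P, prp δ := by
    intro δ hδ
    obtain ⟨ι, F₀, hlsub, hcard⟩ := Ordinal.exists_lsub_cof δ
    have hcc : #I = #ι := by rw [hI, ← hcofP δ hδ, hcard]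
    obtain ⟨e⟩ := Cardinal.eq.1 hcc
    refine ⟨F₀ ∘ e, fun i => hlsub ▸ Ordinal.lt_lsub F₀ (e i), fun β hβ => ?_⟩
    by_contra hcon
    push_neg at hcon
    have : ∀ j, F₀ j < β := by
      intro j
      have := hcon (e.symm j)
      simpa using this
    exact absurd (hlsub ▸ Ordinal.lsub_le this) (not_le.2 hβ)
  set A : Ordinal → I → Ordinal := fun δ => if h : prp δ then h.choose else fun _ => 0
    with hAdef
  have hA : ∀ δ ∈ P, (∀ i, A δ i < δ) ∧ ∀ β < δ, ∃ i, β ≤ A δ i := by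
    intro δ hδ
    simp only [hAdef, dif_pos (hprp δ hδ)]
    exact (hprp δ hδ).choose_spec
  have claim : ∃ i : I, ∀ η < Λ, OStat Λ {δ ∈ P | η < A δ i} := by
    by_contra hcon
    push_neg at hcon
    have hch : ∀ i : I, ∃ η, η < Λ ∧ ∃ Cl, OClub Λ Cl ∧ {δ ∈ P | η < A δ i} ∩ Cl = ∅ := by
      intro i
      obtain ⟨η, hη, hns⟩ := hcon i
      obtain ⟨Cl, h1, h2⟩ := not_ostat_iff.1 hns
      exact ⟨η, hη, Cl, h1, h2⟩
    set η : I → Ordinal := fun i => (hch i).choose with hηdef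
    set Cl : I → Set Ordinal := fun i => (hch i).choose_spec.2.choose with hCldef
    have hη : ∀ i, η i < Λ := fun i => (hch i).choose_spec.1
    have hCl : ∀ i, OClub Λ (Cl i) ∧ {δ ∈ P | η i < A δ i} ∩ Cl i = ∅ := fun i =>
      ⟨(hch i).choose_spec.2.choose_spec.1, (hch i).choose_spec.2.choose_spec.2⟩
    have hηs : (⨆ i, η i) < Λ := isup_lt hΛ hreg η (hI ▸ hlamc) hη
    have hηs1 : (⨆ i, η i) + 1 < Λ := succ_lt_lam hΛ hreg hηs
    obtain ⟨δ, hδP, hδC, hδtail⟩ := hP _ (oclub_inter hΛ hreg hω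
      (oclub_iInter hΛ hreg hω (hI ▸ hlamc) Cl fun i => (hCl i).1)
      (oclub_Ioo hΛ hreg hω hηs1))
    obtain ⟨i, hi⟩ := (hA δ hδP).2 ((⨆ i, η i) + 1) hδtail.1
    have hηi : η i < A δ i :=
      lt_of_le_of_lt (le_ciSup (bddAbove_range_of_lt hη) i) (lt_of_lt_of_le (lt_add_one _) hi)
    have : δ ∈ {x ∈ P | η i < A x i} ∩ Cl i := ⟨⟨hδP, hηi⟩, Set.mem_iInter.1 hδC.2 i⟩
    rw [(hCl i).2] at this
    exact this
  obtain ⟨i₀, hclaim⟩ := claim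
  refine ⟨P, fun z hz => hz.1, fun δ => A δ i₀, hP, fun δ hδ => (hA δ hδ).1 i₀, hclaim⟩

end Fixed7

section Fixed8
variable {κ : Cardinal.{u}} {Λ : Ordinal.{u}}
variable (hΛ : Λ = κ.ord) (hreg : κ.IsRegular) (hω : ℵ₀ < κ)

include hΛ hreg hω

/-- The main lemma: every stationary set has a stationary subset carrying a
regressive function with all "tails" stationary. -/
theorem main_lemma {S : Set Ordinal} (hS : OStat Λ S) (hsub : S ⊆ Set.Iio Λ) :
    ∃ S', S' ⊆ S ∧ ∃ f : Ordinal → Ordinal, OStat Λ S' ∧ (∀ δ ∈ S', f δ < δ) ∧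
      ∀ η < Λ, OStat Λ {δ ∈ S' | η < f δ} := by
  classical
  set S₀ : Set Ordinal := S ∩ {o | o < Λ ∧ Ordinal.omega0 < o ∧ Order.IsSuccLimit o} with hS₀def
  have hS₀ : OStat Λ S₀ := ostat_inter_oclub hΛ hreg hω hS (oclub_limits hΛ hreg hω)
  have hcard2 : #(ULift.{u} Bool) < κ := by
    rw [Cardinal.mk_fintype]
    simp only [Fintype.card_ulift, Fintype.card_bool]
    exact_mod_cast hreg.nat_lt 2
  obtain ⟨b, hb⟩ := ostat_of_cover hΛ hreg hω hcard2 hS₀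
    (fun b => if b.down then {δ | (δ.cof).ord < δ} else {δ | (δ.cof).ord = δ})
    (by
      intro δ hδ
      rcases lt_or_eq_of_le (Ordinal.ord_cof_le δ) with h | h
      · exact Set.mem_iUnion.2 ⟨⟨true⟩, by simpa using h⟩
      · exact Set.mem_iUnion.2 ⟨⟨false⟩, by simpa using h⟩)
  by_cases hbb : b.down
  · simp only [if_pos hbb] at hb
    obtain ⟨S', hS'sub, rest⟩ := case_singular hΛ hreg hω hb
      (fun z hz => hz.1.2.1) (fun δ hδ => hδ.2)
    exact ⟨S', fun z hz => (hS'sub hz).1.1, rest⟩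
  · simp only [if_neg hbb] at hb
    obtain ⟨S', hS'sub, rest⟩ := case_regular hΛ hreg hω hb
      (fun z hz => hz.1.2.1) (fun δ hδ => ⟨hδ.1.2.2.1, hδ.2⟩)
    exact ⟨S', fun z hz => (hS'sub hz).1.1, rest⟩

/-- Solovay-style splitting: every stationary set contains two disjoint
stationary subsets. -/
theorem ostat_split {S : Set Ordinal} (hS : OStat Λ S) (hsub : S ⊆ Set.Iio Λ) :
    ∃ P Q, P ⊆ S ∧ Q ⊆ S ∧ P ∩ Q = ∅ ∧ OStat Λ P ∧ OStat Λ Q := by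
  obtain ⟨S', hS'sub, f, hS'stat, hfreg, htails⟩ := main_lemma hΛ hreg hω hS hsub
  obtain ⟨a, haΛ, hPstat⟩ := fodor hΛ hreg hω hS'stat f hfreg
  refine ⟨{δ ∈ S' | f δ = a}, {δ ∈ S' | a < f δ}, fun z hz => hS'sub hz.1,
    fun z hz => hS'sub hz.1, ?_, hPstat, htails a haΛ⟩
  ext z
  simp only [Set.mem_inter_iff, Set.mem_setOf_eq, Set.mem_empty_iff_false, iff_false]
  rintro ⟨⟨-, h1⟩, ⟨-, h2⟩⟩
  rw [h1] at h2
  exact lt_irrefl _ h2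
end Fixed8

section Fixed9
variable {κ : Cardinal.{u}} {Λ : Ordinal.{u}}
variable (hΛ : Λ = κ.ord) (hreg : κ.IsRegular) (hω : ℵ₀ < κ)

include hΛ hreg hω

theorem ostat_Iio : OStat Λ (Set.Iio Λ) := by
  intro C hC
  obtain ⟨b, hb, -⟩ := hC.2.2 0 (lam_pos hΛ hreg)
  exact ⟨b, hC.1 hb, hb⟩

/-- Simultaneous splitting of fewer than `κ` stationary sets, `κ` inaccessible. -/
theorem osplit_family (hsl : ∀ c < κ, (2 : Cardinal) ^ c < κ)
    {ι : Type u} (hι : #ι < κ) (A : ι → Set Ordinal)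
    (hA : ∀ i, OStat Λ (A i)) (hAsub : ∀ i, A i ⊆ Set.Iio Λ) :
    ∃ Y, OStat Λ Y ∧ ∀ i, OStat Λ (A i ∩ Y) ∧ OStat Λ (A i \ Y) := by
  classical
  rcases isEmpty_or_nonempty ι with hemp | hne
  · exact ⟨Set.Iio Λ, ostat_Iio hΛ hreg hω, fun i => (IsEmpty.false i).elim⟩
  set Pat : Type u := ι → ULift.{u} Bool with hPatdef
  have hPat : #Pat < κ := by
    have h1 : #Pat = (2 : Cardinal) ^ #ι := by
      rw [hPatdef, ← Cardinal.power_def]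
      congr 1
      rw [Cardinal.mk_fintype]
      simp
    rw [h1]
    exact hsl _ hι
  set atom : Pat → Set Ordinal := fun p => {δ | δ < Λ ∧ ∀ i, δ ∈ A i ↔ p i = ⟨true⟩}
    with hatomdef
  have hatom_disj : ∀ p q, p ≠ q → atom p ∩ atom q = ∅ := by
    intro p q hpq
    ext z
    simp only [Set.mem_inter_iff, Set.mem_empty_iff_false, iff_false]
    rintro ⟨⟨-, h1⟩, ⟨-, h2⟩⟩
    refine hpq (funext fun i => ?_)
    have h3 := (h1 i).symm.trans (h2 i)
    rcases hp : p i with ⟨pb⟩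
    rcases hq : q i with ⟨qb⟩
    rw [hp, hq] at h3
    cases pb <;> cases qb <;> simp_all
  have hpick : ∀ i, ∃ p : Pat, OStat Λ (atom p) ∧ atom p ⊆ A i := by
    intro i
    have hcov : A i ⊆ ⋃ p : Pat, atom p := by
      intro δ hδ
      refine Set.mem_iUnion.2 ⟨fun j => if δ ∈ A j then ⟨true⟩ else ⟨false⟩, hAsub i hδ,
        fun j => ?_⟩
      by_cases h : δ ∈ A j <;> simp [h]
    obtain ⟨p, hp⟩ := ostat_of_cover hΛ hreg hω hPat (hA i) atom hcov
    have hptrue : p i = ⟨true⟩ := by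
      by_contra hcon
      have : A i ∩ atom p = ∅ := by
        ext z
        simp only [Set.mem_inter_iff, Set.mem_empty_iff_false, iff_false]
        rintro ⟨hz1, hz2, hz3⟩
        exact hcon ((hz3 i).1 hz1)
      rw [this] at hp
      exact not_ostat_empty hΛ hreg hp
    have hsub : atom p ⊆ A i := fun z hz => (hz.2 i).2 hptrue
    have : A i ∩ atom p = atom p := by
      ext z
      exact ⟨fun h => h.2, fun h => ⟨hsub h, h⟩⟩
    rw [this] at hp
    exact ⟨p, hp, hsub⟩
  set pick : ι → Pat := fun i => (hpick i).choose with hpickdef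
  have hpick' : ∀ i, OStat Λ (atom (pick i)) ∧ atom (pick i) ⊆ A i := fun i =>
    (hpick i).choose_spec
  -- split each stationary atom in two
  have hsplit : ∀ p : Pat, OStat Λ (atom p) → ∃ PQ : Set Ordinal × Set Ordinal,
      PQ.1 ⊆ atom p ∧ PQ.2 ⊆ atom p ∧ PQ.1 ∩ PQ.2 = ∅ ∧ OStat Λ PQ.1 ∧ OStat Λ PQ.2 := by
    intro p hp
    obtain ⟨P, Q, h1, h2, h3, h4, h5⟩ := ostat_split hΛ hreg hω hp (fun z hz => hz.1)
    exact ⟨⟨P, Q⟩, h1, h2, h3, h4, h5⟩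
  set ab : Pat → Set Ordinal × Set Ordinal := fun p =>
    if h : OStat Λ (atom p) then (hsplit p h).choose else ⟨∅, ∅⟩ with habdef
  have hab : ∀ p, OStat Λ (atom p) → (ab p).1 ⊆ atom p ∧ (ab p).2 ⊆ atom p ∧
      (ab p).1 ∩ (ab p).2 = ∅ ∧ OStat Λ (ab p).1 ∧ OStat Λ (ab p).2 := by
    intro p h
    simp only [habdef, dif_pos h]
    exact (hsplit p h).choose_spec
  set Y : Set Ordinal := ⋃ p : Pat, if OStat Λ (atom p) then (ab p).1 else ∅ with hYdef
  have hYsub : ∀ p, OStat Λ (atom p) → (ab p).1 ⊆ Y := by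
    intro p h z hz
    exact Set.mem_iUnion.2 ⟨p, by rw [if_pos h]; exact hz⟩
  have hbY : ∀ p, OStat Λ (atom p) → (ab p).2 ∩ Y = ∅ := by
    intro p h
    ext z
    simp only [Set.mem_inter_iff, Set.mem_empty_iff_false, iff_false]
    rintro ⟨hz1, hz2⟩
    obtain ⟨q, hq⟩ := Set.mem_iUnion.1 hz2
    by_cases hqs : OStat Λ (atom q)
    · rw [if_pos hqs] at hq
      by_cases hpq : p = q
      · subst hpq
        have : z ∈ (ab p).1 ∩ (ab p).2 := ⟨hq, hz1⟩
        rw [(hab p h).2.2.1] at this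
        exact this
      · have : z ∈ atom p ∩ atom q := ⟨(hab p h).2.1 hz1, (hab q hqs).1 hq⟩
        rw [hatom_disj p q hpq] at this
        exact this
    · rw [if_neg hqs] at hq
      exact hq
  obtain ⟨i₀⟩ := hne
  refine ⟨Y, ?_, fun i => ?_⟩
  · exact OStat.mono (hYsub _ (hpick' i₀).1) (hab _ (hpick' i₀).1).2.2.2.1
  · constructor
    · refine OStat.mono ?_ (hab _ (hpick' i).1).2.2.2.1
      intro z hz
      exact ⟨(hpick' i).2 ((hab _ (hpick' i).1).1 hz), hYsub _ (hpick' i).1 hz⟩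
    · refine OStat.mono ?_ (hab _ (hpick' i).1).2.2.2.2
      intro z hz
      refine ⟨(hpick' i).2 ((hab _ (hpick' i).1).2.1 hz), fun hzY => ?_⟩
      have : z ∈ (ab (pick i)).2 ∩ Y := ⟨hz, hzY⟩
      rw [hbY _ (hpick' i).1] at this
      exact this

end Fixed9

/-- If `κ` is inaccessible, then for every family `X` of fewer than `κ` stationary sets
there is a single stationary set `y` stationarily splitting every member of `X`;
consequently `r^cl_κ ≥ κ`. Here `κ` is represented as a well-ordered type `α` of
inaccessible cardinality all of whose proper initial segments are of size `< #α`. -/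
theorem statReapingNumber_ge {α : Type*} [LinearOrder α] [WellFoundedLT α]
    (hinacc : (#α).IsInaccessible)
    (hinit : ∀ a : α, #(Set.Iio a) < #α) :
    (∀ X : Set (Set α), #X < #α → (∀ x ∈ X, IsStatIn x) →
      ∃ y : Set α, IsStatIn y ∧ ∀ x ∈ X, StatSplits y x) ∧
    #α ≤ statReapingNumber α := by
  classical
  obtain ⟨hω, hreg, hstrong⟩ := isInaccessible_def.1 hinacc
  have hsl : ∀ c < #α, (2 : Cardinal) ^ c < #α := fun c hc => hstrong.isStrongPrelimit hc
  set κ : Cardinal := #α with hκdef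
  set Λ : Ordinal := Ordinal.type ((· < ·) : α → α → Prop) with hΛαdef
  set To : α → Ordinal := fun a => Ordinal.typein ((· < ·) : α → α → Prop) a with hTodef
  have hmono : StrictMono To := fun a b h => (Ordinal.typein_lt_typein _).2 h
  have hinj : Function.Injective To := hmono.injective
  have hToLt : ∀ a b : α, To a < To b ↔ a < b := fun a b => Ordinal.typein_lt_typein _
  have hTole : ∀ a b : α, To a ≤ To b ↔ a ≤ b := fun a b => hmono.le_iff_le
  have hToΛ : ∀ a, To a < Λ := fun a => Ordinal.typein_lt_type _ a
  have hsurj : ∀ {o}, o < Λ → ∃ a, To a = o := by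
    intro o ho
    obtain ⟨a, ha⟩ := Ordinal.typein_surj ((· < ·) : α → α → Prop) ho
    exact ⟨a, ha⟩
  have hcardΛ : Λ.card = κ := Ordinal.card_type _
  have hcardlt : ∀ o < Λ, o.card < κ := by
    intro o ho
    obtain ⟨a, rfl⟩ := hsurj ho
    have h1 : (To a).card = #(Set.Iio a) := by
      exact (Ordinal.card_typein (r := ((· < ·) : α → α → Prop)) a).trans
        (Cardinal.mk_congr (Equiv.subtypeEquivRight fun _ => Iff.rfl))
    rw [h1]
    exact hinit a
  have hΛ : Λ = κ.ord := by
    refine le_antisymm ?_ (Cardinal.ord_le.2 hcardΛ.symm.le)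
    by_contra hcon
    push_neg at hcon
    have := hcardlt κ.ord hcon
    rw [Cardinal.card_ord] at this
    exact lt_irrefl _ this
  -- club and stationarity transfer
  have clubA : ∀ c : Set α, IsClubIn c → OClub Λ (To '' c) := by
    intro c hc
    refine ⟨?_, ?_, ?_⟩
    · rintro _ ⟨a, -, rfl⟩
      exact hToΛ a
    · intro s hs hne hlt
      obtain ⟨a, ha⟩ := hsurj hlt
      have hsr : s ⊆ Set.range To := fun z hz => by
        obtain ⟨w, -, rfl⟩ := hs hz
        exact ⟨w, rfl⟩
      set s₀ : Set α := To ⁻¹' s with hs₀def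
      have hs₀c : s₀ ⊆ c := by
        intro w hw
        obtain ⟨w', hw'c, hww'⟩ := hs hw
        exact hinj hww' ▸ hw'c
      have hs₀ne : s₀.Nonempty := by
        obtain ⟨z, hz⟩ := hne
        obtain ⟨w, rfl⟩ := hsr hz
        exact ⟨w, hz⟩
      have hbdd : BddAbove s := bddAbove_of_lt (Λ := Λ) fun z hz => by
        obtain ⟨w, rfl⟩ := hsr hz; exact hToΛ w
      have hlub : IsLUB s₀ a := by
        constructor
        · intro w hw
          have : To w ≤ To a := ha ▸ le_csSup hbdd hw
          exact (hTole w a).1 this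
        · intro b hb
          refine (hTole a b).1 ?_
          rw [ha]
          refine csSup_le hne ?_
          intro z hz
          obtain ⟨w, rfl⟩ := hsr hz
          exact (hTole w b).2 (hb hz)
      have := hc.1 s₀ hs₀c hs₀ne a hlub
      exact ⟨a, this, ha⟩
    · intro o ho
      obtain ⟨a, rfl⟩ := hsurj ho
      obtain ⟨b, hb, hab⟩ := hc.2 a
      exact ⟨To b, ⟨b, hb, rfl⟩, (hToLt a b).2 hab⟩
  have clubB : ∀ C : Set Ordinal, OClub Λ C → IsClubIn (To ⁻¹' C) := by
    intro C hC
    constructor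
    · intro s hs hne a hlub
      have hne' : (To '' s).Nonempty := hne.image To
      have key : sSup (To '' s) = To a := by
        refine le_antisymm (csSup_le hne' ?_) ?_
        · rintro _ ⟨w, hw, rfl⟩
          exact (hTole w a).2 (hlub.1 hw)
        · by_contra hcon
          push_neg at hcon
          have hlt : sSup (To '' s) < Λ := lt_trans hcon (hToΛ a)
          obtain ⟨b, hb⟩ := hsurj hlt
          have hba : b < a := (hToLt b a).1 (hb ▸ hcon)
          have hbub : b ∈ upperBounds s := by
            intro w hw
            have : To w ≤ To b := hb ▸ le_csSup
              (bddAbove_of_lt (Λ := Λ) (by rintro _ ⟨w', -, rfl⟩; exact hToΛ w')) ⟨w, hw, rfl⟩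
            exact (hTole w b).1 this
          exact absurd (hlub.2 hbub) (not_le.2 hba)
      have hsub : To '' s ⊆ C := by
        rintro _ ⟨w, hw, rfl⟩
        exact hs hw
      have := hC.2.1 (To '' s) hsub hne' (key ▸ hToΛ a)
      rw [key] at this
      exact this
    · intro a
      obtain ⟨b, hbC, hab⟩ := hC.2.2 (To a) (hToΛ a)
      obtain ⟨b₀, rfl⟩ := hsurj (hC.1 hbC)
      exact ⟨b₀, hbC, (hToLt a b₀).1 hab⟩
  have statC : ∀ x : Set α, IsStatIn x → OStat Λ (To '' x) := by
    intro x hx C hC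
    obtain ⟨w, hw1, hw2⟩ := hx _ (clubB C hC)
    exact ⟨To w, ⟨w, hw1, rfl⟩, hw2⟩
  have statD : ∀ X : Set Ordinal, OStat Λ X → IsStatIn (To ⁻¹' X) := by
    intro X hX c hc
    obtain ⟨u, hu1, hu2⟩ := hX _ (clubA c hc)
    obtain ⟨w, hwc, rfl⟩ := hu2
    exact ⟨w, hu1, hwc⟩
  have part1 : ∀ X : Set (Set α), #X < #α → (∀ x ∈ X, IsStatIn x) →
      ∃ y : Set α, IsStatIn y ∧ ∀ x ∈ X, StatSplits y x := by
    intro X hX hstat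
    obtain ⟨Y, hYstat, hYsplit⟩ := osplit_family hΛ hreg hω hsl (ι := ↥X) hX
      (fun x => To '' (x : Set α)) (fun x => statC _ (hstat x x.2))
      (fun x => by rintro _ ⟨w, -, rfl⟩; exact hToΛ w)
    refine ⟨To ⁻¹' Y, statD Y hYstat, ?_⟩
    intro x hx
    have h1 : x ∩ To ⁻¹' Y = To ⁻¹' (To '' x ∩ Y) := by
      ext z
      simp only [Set.mem_inter_iff, Set.mem_preimage]
      constructor
      · rintro ⟨hz1, hz2⟩
        exact ⟨⟨z, hz1, rfl⟩, hz2⟩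
      · rintro ⟨⟨w, hw, hwz⟩, hz2⟩
        exact ⟨hinj hwz ▸ hw, hz2⟩
    have h2 : x \ To ⁻¹' Y = To ⁻¹' (To '' x \ Y) := by
      ext z
      simp only [Set.mem_diff, Set.mem_preimage]
      constructor
      · rintro ⟨hz1, hz2⟩
        exact ⟨⟨z, hz1, rfl⟩, hz2⟩
      · rintro ⟨⟨w, hw, hwz⟩, hz2⟩
        exact ⟨hinj hwz ▸ hw, hz2⟩
    exact ⟨h1 ▸ statD _ (hYsplit ⟨x, hx⟩).1, h2 ▸ statD _ (hYsplit ⟨x, hx⟩).2⟩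
  refine ⟨part1, ?_⟩
  -- the reaping-number bound
  have hemptyclub : IsClubIn (To ⁻¹' (Set.Iio Λ)) := clubB _ (oclub_Iio' hΛ hreg)
  have hnotstat_empty : ¬ IsStatIn (∅ : Set α) := by
    intro h
    obtain ⟨z, hz, -⟩ := h _ hemptyclub
    exact hz
  have hsetne : {c : Cardinal | ∃ R : Set (Set α), (∀ y ∈ R, IsStatIn y) ∧
      (∀ x : Set α, IsStatIn x → ∃ y ∈ R, ¬ StatSplits x y) ∧ c = #R}.Nonempty := by
    refine ⟨#{y : Set α | IsStatIn y}, {y : Set α | IsStatIn y}, fun y hy => hy, ?_, rfl⟩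
    intro x hx
    refine ⟨x, hx, ?_⟩
    intro hsp
    have := hsp.2
    rw [Set.diff_self] at this
    exact hnotstat_empty this
  refine le_csInf hsetne ?_
  rintro b ⟨R, hRstat, hreap, rfl⟩
  by_contra hcon
  push_neg at hcon
  obtain ⟨y, hy, hysplit⟩ := part1 R hcon hRstat
  obtain ⟨z, hzR, hznot⟩ := hreap y hy
  exact hznot (hysplit z hzR)
end
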